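/- arXiv:math/9212203 — 12 statements merged into one kernel-verified Lean document; each statement's English description precedes it below -/
import Mathlib

section
/- Let E be a real Banach space, x, y ∈ E, and α ∈ ℝ with x + α y ≠ 0. Then the function φ(t) = ‖x + t y‖ is differentiable at the point α if and only if x₁*(y) = x₂*(y) for every pair of support functionals x₁*, x₂* ∈ S(x + α y). -/
open Set Filter Topology

section Aux

variable {E : Type*} [NormedAddCommGroup E] [NormedSpace ℝ E]

/-- The slope of the norm along an affine line. -/
noncomputable def slFun (u v : E) (t : ℝ) : ℝ := (‖u + t • v‖ - ‖u‖) / t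

lemma convexOn_normAffine (u v : E) :
    ConvexOn ℝ Set.univ (fun t : ℝ => ‖u + t • v‖) := by
  refine ⟨convex_univ, fun s _ t _ a b ha hb hab => ?_⟩
  obtain rfl : b = 1 - a := by linarith
  simp only [smul_eq_mul]
  have key : u + (a * s + (1 - a) * t) • v
      = a • (u + s • v) + (1 - a) • (u + t • v) := by module
  rw [key]
  calc ‖a • (u + s • v) + (1 - a) • (u + t • v)‖
      ≤ ‖a • (u + s • v)‖ + ‖(1 - a) • (u + t • v)‖ := norm_add_le _ _
    _ = a * ‖u + s • v‖ + (1 - a) * ‖u + t • v‖ := by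
        rw [norm_smul, norm_smul, Real.norm_eq_abs, Real.norm_eq_abs,
          abs_of_nonneg ha, abs_of_nonneg hb]

lemma slFun_mono (u v : E) {s t : ℝ} (hs : s ≠ 0) (ht : t ≠ 0) (hst : s ≤ t) :
    slFun u v s ≤ slFun u v t := by
  have := (convexOn_normAffine u v).secant_mono (a := 0) (x := s) (y := t)
    (mem_univ _) (mem_univ _) (mem_univ _) hs ht hst
  simpa [slFun, zero_smul] using this

lemma slFun_le_norm (u v : E) {t : ℝ} (ht : 0 < t) : slFun u v t ≤ ‖v‖ := by
  rw [slFun, div_le_iff₀ ht]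
  have h1 : ‖u + t • v‖ ≤ ‖u‖ + ‖t • v‖ := norm_add_le _ _
  have h2 : ‖t • v‖ = t * ‖v‖ := by
    rw [norm_smul, Real.norm_eq_abs, abs_of_pos ht]
  nlinarith

lemma neg_norm_le_slFun (u v : E) {t : ℝ} (ht : 0 < t) : -‖v‖ ≤ slFun u v t := by
  rw [slFun, le_div_iff₀ ht]
  have h2 : ‖t • v‖ = t * ‖v‖ := by
    rw [norm_smul, Real.norm_eq_abs, abs_of_pos ht]
  have h1 : ‖u‖ - ‖t • v‖ ≤ ‖u + t • v‖ := by
    have h3 := norm_sub_norm_le u (u + t • v)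
    have h4 : u - (u + t • v) = -(t • v) := by module
    rw [h4, norm_neg] at h3
    linarith
  nlinarith

/-- The right derivative at `0` of `t ↦ ‖u + t • v‖`, as an infimum of slopes. -/
noncomputable def pFun (u v : E) : ℝ := sInf (slFun u v '' Ioi 0)

lemma pFun_set_nonempty (u v : E) : (slFun u v '' Ioi 0).Nonempty :=
  ⟨slFun u v 1, 1, by norm_num, rfl⟩

lemma pFun_set_bddBelow (u v : E) : BddBelow (slFun u v '' Ioi 0) := by
  refine ⟨-‖v‖, ?_⟩
  rintro s ⟨t, ht, rfl⟩
  exact neg_norm_le_slFun u v ht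

lemma pFun_le_slFun (u v : E) {t : ℝ} (ht : 0 < t) : pFun u v ≤ slFun u v t :=
  csInf_le (pFun_set_bddBelow u v) ⟨t, ht, rfl⟩

lemma le_pFun (u v : E) {c : ℝ} (hc : ∀ t : ℝ, 0 < t → c ≤ slFun u v t) :
    c ≤ pFun u v := by
  refine le_csInf (pFun_set_nonempty u v) ?_
  rintro s ⟨t, ht, rfl⟩
  exact hc t ht

lemma pFun_le_norm (u v : E) : pFun u v ≤ ‖v‖ :=
  (pFun_le_slFun u v one_pos).trans (slFun_le_norm u v one_pos)

lemma slFun_neg_le_pFun (u v : E) {s : ℝ} (hs : s < 0) : slFun u v s ≤ pFun u v :=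
  le_pFun u v fun t ht => slFun_mono u v hs.ne ht.ne' (hs.le.trans ht.le)

lemma pFun_zero (u : E) : pFun u (0 : E) = 0 := by
  have : slFun u (0 : E) '' Ioi 0 = {0} := by
    apply Subset.antisymm
    · rintro s ⟨t, ht, rfl⟩
      simp [slFun]
    · rintro s rfl
      exact ⟨1, by norm_num, by simp [slFun]⟩
  rw [pFun, this, csInf_singleton]

lemma slFun_smul (u v : E) {c : ℝ} (hc : 0 < c) (t : ℝ) (ht : t ≠ 0) :
    slFun u (c • v) t = c * slFun u v (c * t) := by
  rw [slFun, slFun, smul_smul, mul_comm t c]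
  field_simp

lemma smul_pFun_le (u v : E) {c : ℝ} (hc : 0 < c) :
    c * pFun u v ≤ pFun u (c • v) := by
  refine le_pFun u _ fun t ht => ?_
  rw [slFun_smul u v hc t ht.ne']
  have h := pFun_le_slFun u v (t := c * t) (by positivity)
  nlinarith

lemma pFun_smul (u v : E) {c : ℝ} (hc : 0 < c) : pFun u (c • v) = c * pFun u v := by
  refine le_antisymm ?_ (smul_pFun_le u v hc)
  have h := smul_pFun_le u (c • v) (c := c⁻¹) (by positivity)
  rw [smul_smul, inv_mul_cancel₀ hc.ne', one_smul] at h
  calc pFun u (c • v) = c * (c⁻¹ * pFun u (c • v)) := by field_simp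
    _ ≤ c * pFun u v := by nlinarith

lemma slFun_add_le (u v w : E) {t : ℝ} (ht : 0 < t) :
    slFun u (v + w) t ≤ slFun u v (2 * t) + slFun u w (2 * t) := by
  have hkey : u + t • (v + w)
      = (1 / 2 : ℝ) • (u + (2 * t) • v) + (1 / 2 : ℝ) • (u + (2 * t) • w) := by module
  have hn : ‖u + t • (v + w)‖ ≤ (‖u + (2 * t) • v‖ + ‖u + (2 * t) • w‖) / 2 := by
    rw [hkey]
    calc ‖(1 / 2 : ℝ) • (u + (2 * t) • v) + (1 / 2 : ℝ) • (u + (2 * t) • w)‖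
        ≤ ‖(1 / 2 : ℝ) • (u + (2 * t) • v)‖ + ‖(1 / 2 : ℝ) • (u + (2 * t) • w)‖ :=
          norm_add_le _ _
      _ = (‖u + (2 * t) • v‖ + ‖u + (2 * t) • w‖) / 2 := by
          rw [norm_smul, norm_smul]; simp; ring
  rw [slFun, slFun, slFun, ← add_div, div_le_div_iff₀ ht (by positivity)]
  nlinarith [mul_le_mul_of_nonneg_right hn ht.le]

lemma pFun_add_le (u v w : E) : pFun u (v + w) ≤ pFun u v + pFun u w := by
  by_contra hcon
  push_neg at hcon
  set ε := (pFun u (v + w) - (pFun u v + pFun u w)) / 2 with hε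
  have hεpos : 0 < ε := by rw [hε]; linarith
  obtain ⟨s1, ⟨t1, ht1, rfl⟩, h1⟩ := exists_lt_of_csInf_lt (pFun_set_nonempty u v)
    (show pFun u v < pFun u v + ε / 2 by linarith)
  obtain ⟨s2, ⟨t2, ht2, rfl⟩, h2⟩ := exists_lt_of_csInf_lt (pFun_set_nonempty u w)
    (show pFun u w < pFun u w + ε / 2 by linarith)
  rw [mem_Ioi] at ht1 ht2
  set t := min t1 t2 / 2 with htdef
  have ht : 0 < t := by positivity
  have h2t1 : 2 * t ≤ t1 := by
    rw [htdef]; have := min_le_left t1 t2; linarith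
  have h2t2 : 2 * t ≤ t2 := by
    rw [htdef]; have := min_le_right t1 t2; linarith
  have key := slFun_add_le u v w ht
  have hm1 : slFun u v (2 * t) ≤ slFun u v t1 :=
    slFun_mono u v (by positivity) ht1.ne' h2t1
  have hm2 : slFun u w (2 * t) ≤ slFun u w t2 :=
    slFun_mono u w (by positivity) ht2.ne' h2t2
  have hp := pFun_le_slFun u (v + w) ht
  rw [hε] at *
  linarith

lemma pFun_neg_add_nonneg (u v : E) : 0 ≤ pFun u v + pFun u (-v) := by
  have h := pFun_add_le u v (-v)
  rw [add_neg_cancel, pFun_zero] at h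
  linarith

/-- Hahn–Banach construction: a support functional at `u` whose value at `w`
is the right derivative `pFun u w`. -/
lemma exists_suppFunctional (u : E) (hu : u ≠ 0) (w : E) (hw : w ≠ 0) :
    ∃ f : E →L[ℝ] ℝ, ‖f‖ = 1 ∧ f u = ‖u‖ ∧ f w = pFun u w := by
  set fl : E →ₗ.[ℝ] ℝ := LinearPMap.mkSpanSingleton w (pFun u w) hw with hfl
  have hdom : ∀ z : fl.domain, fl z ≤ pFun u (z : E) := by
    rintro ⟨z, hz⟩
    obtain ⟨c, rfl⟩ := Submodule.mem_span_singleton.mp hz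
    have happ : fl ⟨c • w, hz⟩ = c • pFun u w :=
      LinearPMap.mkSpanSingleton'_apply w (pFun u w) _ c hz
    show fl ⟨c • w, hz⟩ ≤ pFun u (c • w)
    rw [happ, smul_eq_mul]
    rcases lt_trichotomy c 0 with hc | rfl | hc
    · have h1 : c • w = (-c) • (-w) := by module
      rw [h1, pFun_smul u (-w) (by linarith)]
      have h2 := pFun_neg_add_nonneg u w
      nlinarith
    · simp [pFun_zero]
    · rw [pFun_smul u w hc]
  obtain ⟨g, hg_eq, hg_le⟩ := exists_extension_of_le_sublinear fl (pFun u)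
    (fun c hc z => pFun_smul u z hc) (fun z₁ z₂ => pFun_add_le u z₁ z₂) hdom
  have hbound : ∀ z : E, |g z| ≤ ‖z‖ := by
    intro z
    rw [abs_le]
    constructor
    · have := (hg_le (-z)).trans (pFun_le_norm u (-z))
      rw [map_neg, norm_neg] at this
      linarith
    · exact (hg_le z).trans (pFun_le_norm u z)
  set f : E →L[ℝ] ℝ := g.mkContinuous 1 (fun z => by
    rw [Real.norm_eq_abs, one_mul]; exact hbound z) with hf
  have hfz : ∀ z, f z = g z := fun z => rfl
  have hfu : f u = ‖u‖ := by
    have h1 : f u ≤ ‖u‖ := (hg_le u).trans (pFun_le_norm u u)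
    have h2 : pFun u (-u) ≤ -‖u‖ := by
      have := pFun_le_slFun u (-u) (t := 1 / 2) (by norm_num)
      have hcalc : slFun u (-u) (1 / 2) = -‖u‖ := by
        rw [slFun]
        have : u + (1 / 2 : ℝ) • (-u) = (1 / 2 : ℝ) • u := by module
        rw [this, norm_smul]
        simp
        ring
      rw [hcalc] at this
      exact this
    have h3 : f (-u) ≤ -‖u‖ := (hg_le (-u)).trans h2
    rw [map_neg] at h3
    linarith
  have hnorm : ‖f‖ = 1 := by
    have hle : ‖f‖ ≤ 1 := g.mkContinuous_norm_le zero_le_one _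
    have hu' : 0 < ‖u‖ := norm_pos_iff.mpr hu
    have := f.le_opNorm u
    rw [hfu] at this
    have hge : 1 ≤ ‖f‖ := by
      rw [Real.norm_eq_abs, abs_of_nonneg (norm_nonneg u)] at this
      nlinarith
    linarith
  refine ⟨f, hnorm, hfu, ?_⟩
  have hmem : w ∈ fl.domain := Submodule.mem_span_singleton_self w
  have h1 : g w = fl ⟨w, hmem⟩ := hg_eq ⟨w, hmem⟩
  have h2 : fl ⟨w, hmem⟩ = pFun u w :=
    LinearPMap.mkSpanSingleton_apply ℝ ℝ hw (pFun u w)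
  rw [hfz, h1, h2]

/-- The slopes tend to `pFun u v` from the right. -/
lemma tendsto_slFun_right (u v : E) :
    Tendsto (slFun u v) (𝓝[>] (0 : ℝ)) (𝓝 (pFun u v)) := by
  rw [tendsto_order]
  constructor
  · intro a ha
    filter_upwards [self_mem_nhdsWithin] with t ht
    exact ha.trans_le (pFun_le_slFun u v ht)
  · intro a ha
    obtain ⟨s, ⟨t0, ht0, rfl⟩, hs⟩ := exists_lt_of_csInf_lt (pFun_set_nonempty u v) ha
    rw [mem_Ioi] at ht0
    filter_upwards [Ioo_mem_nhdsGT ht0] with t ht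
    exact (slFun_mono u v ht.1.ne' ht0.ne' ht.2.le).trans_lt hs

lemma slFun_neg_eq (u v : E) (t : ℝ) (ht : t ≠ 0) :
    slFun u v t = -slFun u (-v) (-t) := by
  have h2 : u + (-t) • (-v) = u + t • v := by module
  rw [slFun, slFun, h2, div_neg, neg_neg]

/-- The slopes tend to `-pFun u (-v)` from the left. -/
lemma tendsto_slFun_left (u v : E) :
    Tendsto (slFun u v) (𝓝[<] (0 : ℝ)) (𝓝 (-pFun u (-v))) := by
  have hneg : Tendsto (fun t : ℝ => -t) (𝓝[<] (0 : ℝ)) (𝓝[>] (0 : ℝ)) := by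
    apply tendsto_nhdsWithin_of_tendsto_nhds_of_eventually_within
    · simpa using (tendsto_neg (0 : ℝ)).mono_left nhdsWithin_le_nhds
    · filter_upwards [self_mem_nhdsWithin] with t ht
      simpa using ht
  have := ((tendsto_slFun_right u (-v)).comp hneg).neg
  refine this.congr' ?_
  filter_upwards [self_mem_nhdsWithin] with t ht
  rw [Function.comp_apply, ← slFun_neg_eq u v t ht.ne]

lemma hasDerivAt_of_pFun_eq (u v : E) (heq : pFun u v = -pFun u (-v)) :
    HasDerivAt (fun t : ℝ => ‖u + t • v‖) (pFun u v) 0 := by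
  rw [hasDerivAt_iff_tendsto_slope]
  have hsl : ∀ t ∈ ({(0:ℝ)}ᶜ : Set ℝ),
      slope (fun t : ℝ => ‖u + t • v‖) 0 t = slFun u v t := by
    intro t ht
    rw [slope_def_field, slFun]
    simp [div_eq_div_iff]
  rw [← nhdsLT_sup_nhdsGT, tendsto_sup]
  constructor
  · have h1 : Tendsto (slFun u v) (𝓝[<] (0 : ℝ)) (𝓝 (pFun u v)) := by
      rw [heq]; exact tendsto_slFun_left u v
    refine h1.congr' ?_
    filter_upwards [self_mem_nhdsWithin] with t ht
    exact (hsl t ht.ne).symm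
  · refine (tendsto_slFun_right u v).congr' ?_
    filter_upwards [self_mem_nhdsWithin] with t ht
    exact (hsl t (ne_of_gt ht)).symm

end Aux

/-- The set of support functionals at `x`: norm-one continuous functionals attaining `‖x‖` at `x`. -/
def suppSet {E : Type*} [NormedAddCommGroup E] [NormedSpace ℝ E] (x : E) :
    Set (E →L[ℝ] ℝ) :=
  {f | ‖f‖ = 1 ∧ f x = ‖x‖}

theorem norm_differentiableAt_iff_support_functionals_agree
    {E : Type*} [NormedAddCommGroup E] [NormedSpace ℝ E] [CompleteSpace E]
    (x y : E) (α : ℝ) (h : x + α • y ≠ 0) :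
    DifferentiableAt ℝ (fun t : ℝ => ‖x + t • y‖) α ↔
      ∀ f ∈ suppSet (x + α • y), ∀ g ∈ suppSet (x + α • y), f y = g y := by
  rcases eq_or_ne y 0 with rfl | hy
  · simp only [smul_zero, add_zero]
    constructor
    · intro _ f _ g _
      simp
    · intro _
      exact differentiableAt_const _
  set u := x + α • y with hu_def
  constructor
  · -- differentiable → support functionals agree
    intro hD
    have hD' := hD.hasDerivAt
    have key : ∀ f ∈ suppSet u, f y = deriv (fun t : ℝ => ‖x + t • y‖) α := by
      rintro f ⟨hf1, hf2⟩
      set φ := fun t : ℝ => ‖x + t • y‖ with hφ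
      have haff : HasDerivAt (fun t : ℝ => f (x + t • y)) (f y) α := by
        have : (fun t : ℝ => f (x + t • y)) = fun t : ℝ => f x + t * f y := by
          funext t
          rw [map_add, map_smul, smul_eq_mul]
        rw [this]
        simpa using ((hasDerivAt_id α).mul_const (f y)).const_add (f x)
      have hg : HasDerivAt (fun t : ℝ => φ t - f (x + t • y))
          (deriv φ α - f y) α := hD'.sub haff
      have hmin : IsLocalMin (fun t : ℝ => φ t - f (x + t • y)) α := by
        apply Filter.Eventually.of_forall
        intro t
        have h1 : f (x + t • y) ≤ ‖x + t • y‖ := by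
          calc f (x + t • y) ≤ |f (x + t • y)| := le_abs_self _
            _ = ‖f (x + t • y)‖ := rfl
            _ ≤ ‖f‖ * ‖x + t • y‖ := f.le_opNorm _
            _ = ‖x + t • y‖ := by rw [hf1, one_mul]
        have h2 : φ α - f (x + α • y) = 0 := by
          rw [hφ]
          simp only [← hu_def]
          rw [hf2]
          ring
        simp only [h2]
        have : φ t = ‖x + t • y‖ := rfl
        linarith
      have := hmin.hasDerivAt_eq_zero hg
      linarith
    intro f hf g hg
    rw [key f hf, key g hg]
  · -- support functionals agree → differentiable
    intro hA
    have hu : u ≠ 0 := h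
    obtain ⟨fp, hfpn, hfpu, hfpy⟩ := exists_suppFunctional u hu y hy
    obtain ⟨fm, hfmn, hfmu, hfmy⟩ := exists_suppFunctional u hu (-y) (neg_ne_zero.mpr hy)
    have hfy : fp y = fm y := hA fp ⟨hfpn, hfpu⟩ fm ⟨hfmn, hfmu⟩
    have heq : pFun u y = -pFun u (-y) := by
      rw [← hfpy, ← hfmy, map_neg]
      rw [hfy]
      ring
    have hD0 : HasDerivAt (fun s : ℝ => ‖u + s • y‖) (pFun u y) 0 :=
      hasDerivAt_of_pFun_eq u y heq
    have hinner : HasDerivAt (fun t : ℝ => t - α) 1 α := by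
      simpa using (hasDerivAt_id α).sub_const α
    have hcomp : HasDerivAt (fun t : ℝ => ‖u + (t - α) • y‖) (pFun u y * 1) α := by
      have h0 : α - α = (0 : ℝ) := sub_self α
      exact HasDerivAt.comp α (h0 ▸ hD0) hinner
    have hfun : (fun t : ℝ => ‖u + (t - α) • y‖) = fun t : ℝ => ‖x + t • y‖ := by
      funext t
      congr 1
      rw [hu_def]
      module
    rw [hfun] at hcomp
    exact hcomp.differentiableAt
end

section
/- Let E be a real Banach space, x, y ∈ E with x ≠ 0. Then x is James-orthogonal to y if and only if inf_{x* ∈ S(x)} x*(y) ≤ 0 ≤ sup_{x* ∈ S(x)} x*(y). -/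
/-- James orthogonality: `x ⊥ y` iff `‖x + α • y‖ ≥ ‖x‖` for every real `α`. -/
def JamesOrth {E : Type*} [NormedAddCommGroup E] [NormedSpace ℝ E] (x y : E) : Prop :=
  ∀ α : ℝ, ‖x‖ ≤ ‖x + α • y‖

/-- If `x ⊥ y` (James), there is a support functional at `x` killing `y`. -/
theorem jamesOrth_exists_support {E : Type*} [NormedAddCommGroup E] [NormedSpace ℝ E]
    (x y : E) (hx : x ≠ 0) (ho : JamesOrth x y) :
    ∃ g ∈ suppSet x, g y = 0 := by
  by_cases hdep : ∃ c : ℝ, y = c • x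
  · -- dependent case: orthogonality forces y = 0
    obtain ⟨c, rfl⟩ := hdep
    have hc : c = 0 := by
      by_contra hc
      have h := ho (-(1/c))
      have : x + (-(1/c)) • c • x = 0 := by
        rw [smul_smul]
        field_simp
        simp
      rw [this, norm_zero] at h
      exact hx (norm_le_zero_iff.mp h)
    obtain ⟨g, hg1, hg2⟩ := exists_dual_vector ℝ x (norm_ne_zero_iff.mpr hx)
    refine ⟨g, ⟨hg1, by simpa using hg2⟩, ?_⟩
    simp [hc]
  · -- independent case
    push_neg at hdep
    set T : ℝ × ℝ →ₗ[ℝ] E :=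
      { toFun := fun v => v.1 • x + v.2 • y
        map_add' := fun a b => by simp [add_smul]; abel
        map_smul' := fun c v => by simp [smul_smul, smul_add] } with hT
    have hTinj : Function.Injective T := by
      rw [← LinearMap.ker_eq_bot, LinearMap.ker_eq_bot']
      rintro ⟨a, b⟩ hab
      simp only [hT, LinearMap.coe_mk, AddHom.coe_mk] at hab
      rcases eq_or_ne b 0 with hb | hb
      · subst hb
        simp only [zero_smul, add_zero] at hab
        rcases smul_eq_zero.mp hab with ha | h
        · simp [ha]
        · exact absurd h hx
      · exfalso
        apply hdep (-(a/b))
        have : b • y = -(a • x) := by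
          rw [eq_neg_iff_add_eq_zero, add_comm]; exact hab
        have := congrArg (fun z => b⁻¹ • z) this
        simp only [smul_smul, inv_mul_cancel₀ hb, one_smul, smul_neg] at this
        rw [this, div_eq_inv_mul, neg_smul]
    set e := LinearEquiv.ofInjective T hTinj with he
    -- key norm bound
    have key : ∀ a b : ℝ, ‖x‖ * |a| ≤ ‖a • x + b • y‖ := by
      intro a b
      rcases eq_or_ne a 0 with ha | ha
      · simp [ha]
      · have : a • x + b • y = a • (x + (b / a) • y) := by
          rw [smul_add, smul_smul]
          field_simp
        rw [this, norm_smul, Real.norm_eq_abs, mul_comm ‖x‖ |a|]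
        exact mul_le_mul_of_nonneg_left (ho (b / a)) (abs_nonneg a)
    -- linear functional on the range of T
    set f₀ : LinearMap.range T →ₗ[ℝ] ℝ :=
      ‖x‖ • ((LinearMap.fst ℝ ℝ ℝ).comp e.symm.toLinearMap) with hf₀
    have hf₀app : ∀ z : LinearMap.range T, f₀ z = ‖x‖ * (e.symm z).1 := fun z => rfl
    have hcoe : ∀ z : LinearMap.range T, (z : E) = T (e.symm z) := by
      intro z
      conv_lhs => rw [← e.apply_symm_apply z]
      rw [LinearEquiv.ofInjective_apply]
    have hbound : ∀ z : LinearMap.range T, ‖f₀ z‖ ≤ 1 * ‖z‖ := by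
      intro z
      rw [hf₀app, one_mul, Real.norm_eq_abs, abs_mul, abs_of_nonneg (norm_nonneg x)]
      have : ‖(z : E)‖ = ‖(e.symm z).1 • x + (e.symm z).2 • y‖ := by
        rw [hcoe z]; rfl
      calc ‖x‖ * |(e.symm z).1| ≤ ‖(e.symm z).1 • x + (e.symm z).2 • y‖ := key _ _
        _ = ‖z‖ := this.symm
    set f : LinearMap.range T →L[ℝ] ℝ := f₀.mkContinuous 1 hbound with hf
    have hfnorm : ‖f‖ ≤ 1 := f₀.mkContinuous_norm_le zero_le_one hbound
    obtain ⟨g, hg_ext, hg_norm⟩ := exists_extension_norm_eq (LinearMap.range T) f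
    -- compute e.symm on x and y
    have hxm : x ∈ LinearMap.range T := ⟨(1, 0), by simp [hT]⟩
    have hym : y ∈ LinearMap.range T := ⟨(0, 1), by simp [hT]⟩
    have hsx : e.symm ⟨x, hxm⟩ = (1, 0) := by
      apply e.injective
      rw [LinearEquiv.apply_symm_apply]
      symm
      apply Subtype.ext
      rw [LinearEquiv.ofInjective_apply]
      simp [hT]
    have hsy : e.symm ⟨y, hym⟩ = (0, 1) := by
      apply e.injective
      rw [LinearEquiv.apply_symm_apply]
      symm
      apply Subtype.ext
      rw [LinearEquiv.ofInjective_apply]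
      simp [hT]
    have hgx : g x = ‖x‖ := by
      have h := hg_ext ⟨x, hxm⟩
      rw [h, LinearMap.mkContinuous_apply, hf₀app, hsx]
      simp
    have hgy : g y = 0 := by
      have h := hg_ext ⟨y, hym⟩
      rw [h, LinearMap.mkContinuous_apply, hf₀app, hsy]
      simp
    have hgnorm : ‖g‖ = 1 := by
      refine le_antisymm (hg_norm ▸ hfnorm) ?_
      have h1 : 1 * ‖x‖ ≤ ‖g‖ * ‖x‖ := by
        rw [one_mul]
        calc ‖x‖ = g x := hgx.symm
          _ ≤ ‖g‖ * ‖x‖ := le_trans (le_abs_self _) (g.le_opNorm x)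
      have hxpos : 0 < ‖x‖ := norm_pos_iff.mpr hx
      exact (mul_le_mul_iff_left₀ hxpos).mp h1
    exact ⟨g, ⟨hgnorm, hgx⟩, hgy⟩

theorem jamesOrth_iff_inf_le_zero_le_sup
    {E : Type*} [NormedAddCommGroup E] [NormedSpace ℝ E] [CompleteSpace E]
    (x y : E) (hx : x ≠ 0) :
    JamesOrth x y ↔
      sInf ((fun f : E →L[ℝ] ℝ => f y) '' suppSet x) ≤ 0 ∧
        0 ≤ sSup ((fun f : E →L[ℝ] ℝ => f y) '' suppSet x) := by
  set S := (fun f : E →L[ℝ] ℝ => f y) '' suppSet x with hS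
  have hbddA : BddAbove S := by
    refine ⟨‖y‖, ?_⟩
    rintro _ ⟨f, ⟨hf1, _⟩, rfl⟩
    calc f y ≤ ‖f‖ * ‖y‖ := le_trans (le_abs_self _) (f.le_opNorm y)
      _ = ‖y‖ := by rw [hf1, one_mul]
  have hbddB : BddBelow S := by
    refine ⟨-‖y‖, ?_⟩
    rintro _ ⟨f, ⟨hf1, _⟩, rfl⟩
    have : |f y| ≤ ‖y‖ := by
      calc |f y| = ‖f y‖ := rfl
        _ ≤ ‖f‖ * ‖y‖ := f.le_opNorm y
        _ = ‖y‖ := by rw [hf1, one_mul]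
    linarith [neg_abs_le (f y)]
  constructor
  · intro ho
    obtain ⟨g, hg, hgy⟩ := jamesOrth_exists_support x y hx ho
    have hmem : (0 : ℝ) ∈ S := ⟨g, hg, hgy⟩
    exact ⟨csInf_le hbddB hmem, le_csSup hbddA hmem⟩
  · rintro ⟨hinf, hsup⟩ α
    have hne : S.Nonempty := by
      obtain ⟨g, hg1, hg2⟩ := exists_dual_vector ℝ x (norm_ne_zero_iff.mpr hx)
      exact ⟨g y, ⟨g, ⟨hg1, by simpa using hg2⟩, rfl⟩⟩
    rcases lt_trichotomy α 0 with hα | hα | hα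
    · -- α < 0 : use sInf ≤ 0
      refine le_of_forall_pos_le_add fun ε hε => ?_
      have hlt : sInf S < ε / (-α) := lt_of_le_of_lt hinf (div_pos hε (neg_pos.mpr hα))
      obtain ⟨_, ⟨f, ⟨hf1, hf2⟩, rfl⟩, hfy⟩ := exists_lt_of_csInf_lt hne hlt
      have h1 : f (x + α • y) ≤ ‖x + α • y‖ := by
        calc f (x + α • y) ≤ ‖f‖ * ‖x + α • y‖ :=
              le_trans (le_abs_self _) (f.le_opNorm _)
          _ = ‖x + α • y‖ := by rw [hf1, one_mul]
      have h2 : f (x + α • y) = ‖x‖ + α * f y := by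
        rw [map_add, hf2, map_smul]; rfl
      have h3 : α * f y > α * (ε / (-α)) := by
        exact (mul_lt_mul_left_of_neg hα).mpr hfy
      have hα0 : α ≠ 0 := ne_of_lt hα
      have h4 : α * (ε / (-α)) = -ε := by
        rw [div_neg, mul_neg, mul_div_cancel₀ ε hα0]
      linarith
    · simp [hα]
    · -- α > 0 : use 0 ≤ sSup
      refine le_of_forall_pos_le_add fun ε hε => ?_
      have hlt : -(ε / α) < sSup S := lt_of_lt_of_le (neg_neg_iff_pos.mpr (div_pos hε hα)) hsup
      obtain ⟨_, ⟨f, ⟨hf1, hf2⟩, rfl⟩, hfy⟩ := exists_lt_of_lt_csSup hne hlt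
      have h1 : f (x + α • y) ≤ ‖x + α • y‖ := by
        calc f (x + α • y) ≤ ‖f‖ * ‖x + α • y‖ :=
              le_trans (le_abs_self _) (f.le_opNorm _)
          _ = ‖x + α • y‖ := by rw [hf1, one_mul]
      have h2 : f (x + α • y) = ‖x‖ + α * f y := by
        rw [map_add, hf2, map_smul]; rfl
      have h3 : α * f y > α * (-(ε / α)) := by
        exact (mul_lt_mul_iff_right₀ hα).mpr hfy
      have h4 : α * (-(ε / α)) = -ε := by
        rw [mul_neg, mul_div_cancel₀ ε (ne_of_gt hα)]
      linarith
end

section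
/- (Lemma 1(i)) Let E be a real Banach space, x, y ∈ E linearly independent, α ∈ D(x,y), and a, b ∈ ℝ. Then the number x*(a x + b y) does not depend on the choice of x* ∈ S(x + α y): for all x₁*, x₂* ∈ S(x + α y), x₁*(a x + b y) = x₂*(a x + b y). -/
lemma supp_deriv {E : Type*} [NormedAddCommGroup E] [NormedSpace ℝ E]
    (x y : E) (α : ℝ)
    (hα : DifferentiableAt ℝ (fun t : ℝ => ‖x + t • y‖) α)
    (f : E →L[ℝ] ℝ) (hf : f ∈ suppSet (x + α • y)) :
    f y = deriv (fun t : ℝ => ‖x + t • y‖) α := by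
  obtain ⟨hf1, hf2⟩ := hf
  have hψ : HasDerivAt (fun t : ℝ => f (x + t • y)) (f y) α := by
    have : HasDerivAt (fun t : ℝ => f x + t * f y) (f y) α := by
      simpa using ((hasDerivAt_id α).mul_const (f y)).const_add (f x)
    convert this using 1
    funext t
    simp [map_add, map_smul, smul_eq_mul]
  have hle : ∀ t : ℝ, f (x + t • y) ≤ ‖x + t • y‖ := by
    intro t
    calc f (x + t • y) ≤ |f (x + t • y)| := le_abs_self _
    _ ≤ ‖f‖ * ‖x + t • y‖ := f.le_opNorm _
    _ = ‖x + t • y‖ := by rw [hf1, one_mul]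
  have hmin : IsLocalMin (fun t : ℝ => ‖x + t • y‖ - f (x + t • y)) α := by
    have hmin0 : IsMinOn (fun t : ℝ => ‖x + t • y‖ - f (x + t • y)) Set.univ α := by
      intro t _
      simp only [Set.mem_setOf_eq, hf2, sub_self]
      exact sub_nonneg.2 (hle t)
    exact hmin0.isLocalMin Filter.univ_mem
  have hd : deriv (fun t : ℝ => ‖x + t • y‖ - f (x + t • y)) α = 0 :=
    hmin.deriv_eq_zero
  have := deriv_fun_sub hα hψ.differentiableAt
  rw [this, hψ.deriv] at hd
  linarith

theorem support_functional_value_independent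
    {E : Type*} [NormedAddCommGroup E] [NormedSpace ℝ E] [CompleteSpace E]
    (x y : E) (hxy : LinearIndependent ℝ ![x, y]) (α : ℝ)
    (hα : DifferentiableAt ℝ (fun t : ℝ => ‖x + t • y‖) α) (a b : ℝ) :
    ∀ f ∈ suppSet (x + α • y), ∀ g ∈ suppSet (x + α • y),
      f (a • x + b • y) = g (a • x + b • y) := by
  intro f hf g hg
  have hfy := supp_deriv x y α hα f hf
  have hgy := supp_deriv x y α hα g hg
  have hfx : f x = ‖x + α • y‖ - α * f y := by
    have := hf.2
    simp only [map_add, map_smul, smul_eq_mul] at this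
    linarith
  have hgx : g x = ‖x + α • y‖ - α * g y := by
    have := hg.2
    simp only [map_add, map_smul, smul_eq_mul] at this
    linarith
  simp only [map_add, map_smul, smul_eq_mul, hfx, hgx, hfy, hgy]
end

section
/- (Lemma 1(ii)) Let E be a real Banach space, x, y ∈ E linearly independent, α ∈ D(x,y), and a, b ∈ ℝ. Then x + α y is James-orthogonal to a x + b y if and only if x*(a x + b y) = 0 for every x* ∈ S(x + α y). -/
theorem jamesOrth_iff_support_functionals_vanish
    {E : Type*} [NormedAddCommGroup E] [NormedSpace ℝ E] [CompleteSpace E]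
    (x y : E) (hxy : LinearIndependent ℝ ![x, y]) (α : ℝ)
    (hα : DifferentiableAt ℝ (fun t : ℝ => ‖x + t • y‖) α) (a b : ℝ) :
    JamesOrth (x + α • y) (a • x + b • y) ↔
      ∀ f ∈ suppSet (x + α • y), f (a • x + b • y) = 0 := by
  have hpair := LinearIndependent.pair_iff.mp hxy
  set z : E := x + α • y with hzdef
  set w : E := a • x + b • y with hwdef
  have hz : z ≠ 0 := by
    intro h
    have := (hpair 1 α (by simpa using h)).1
    norm_num at this
  set ψ : ℝ → ℝ := fun t => ‖z + t • w‖ with hψdef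
  -- ψ is differentiable at 0
  have hu : DifferentiableAt ℝ (fun t : ℝ => (α + t * b) / (1 + t * a)) 0 := by
    apply DifferentiableAt.div
    · fun_prop
    · fun_prop
    · norm_num
  have hcomp : DifferentiableAt ℝ
      (fun t : ℝ => ‖x + ((α + t * b) / (1 + t * a)) • y‖) 0 :=
    DifferentiableAt.comp (g := fun s : ℝ => ‖x + s • y‖)
      (f := fun t : ℝ => (α + t * b) / (1 + t * a)) 0
      (show DifferentiableAt ℝ (fun s : ℝ => ‖x + s • y‖)
        ((fun t : ℝ => (α + t * b) / (1 + t * a)) 0) by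
          rw [show ((fun t : ℝ => (α + t * b) / (1 + t * a)) 0) = α by norm_num]
          exact hα) hu
  have hg : DifferentiableAt ℝ
      (fun t : ℝ => (1 + t * a) * ‖x + ((α + t * b) / (1 + t * a)) • y‖) 0 :=
    DifferentiableAt.mul (by fun_prop) hcomp
  have heq : ψ =ᶠ[nhds (0:ℝ)]
      fun t : ℝ => (1 + t * a) * ‖x + ((α + t * b) / (1 + t * a)) • y‖ := by
    have hcont : ContinuousAt (fun t : ℝ => 1 + t * a) 0 := by fun_prop
    have h1 : Filter.Tendsto (fun t : ℝ => 1 + t * a) (nhds 0) (nhds (1 + 0 * a)) := hcont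
    have hpos : ∀ᶠ t in nhds (0:ℝ), 0 < 1 + t * a :=
      h1.eventually (eventually_gt_nhds (show (0:ℝ) < 1 + 0 * a by norm_num))
    filter_upwards [hpos] with t ht
    have hne : (1 + t * a) ≠ 0 := ne_of_gt ht
    have e1 : z + t • w = (1 + t * a) • x + (α + t * b) • y := by
      rw [hzdef, hwdef]; module
    have e2 : (1 + t * a) • (x + ((α + t * b) / (1 + t * a)) • y)
        = (1 + t * a) • x + (α + t * b) • y := by
      rw [smul_add, smul_smul, mul_div_cancel₀ _ hne]
    rw [hψdef]
    simp only [e1, ← e2, norm_smul, Real.norm_eq_abs, abs_of_pos ht]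
  have hψd : DifferentiableAt ℝ ψ 0 := hg.congr_of_eventuallyEq heq
  -- every support functional at z sends w to deriv ψ 0
  have key : ∀ f ∈ suppSet z, f w = deriv ψ 0 := by
    rintro f ⟨hf1, hf2⟩
    have hbound : ∀ t : ℝ, f (z + t • w) ≤ ψ t := by
      intro t
      calc f (z + t • w) ≤ ‖f (z + t • w)‖ := le_abs_self _
        _ ≤ ‖f‖ * ‖z + t • w‖ := f.le_opNorm _
        _ = ψ t := by rw [hf1, one_mul]
    have hψ0 : ψ 0 = ‖z‖ := by simp [hψdef]
    have hmin : IsLocalMin (fun t => ψ t - t * f w) 0 := by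
      refine Filter.Eventually.of_forall fun t => ?_
      have h1 : f (z + t • w) = ‖z‖ + t * f w := by
        rw [map_add, map_smul, hf2]; simp
      have := hbound t
      simp only [hψ0, zero_mul, sub_zero]
      linarith [h1 ▸ this]
    have hd : deriv (fun t : ℝ => ψ t - t * f w) 0 = deriv ψ 0 - f w := by
      rw [deriv_fun_sub hψd (by fun_prop)]
      have h2 : deriv (fun t : ℝ => t * f w) 0 = f w := by
        simpa using ((hasDerivAt_id (0:ℝ)).mul_const (f w)).deriv
      rw [h2]
    have h0 := hmin.deriv_eq_zero
    rw [hd] at h0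
    linarith
  constructor
  · intro hJ f hf
    have hψmin : IsLocalMin ψ 0 := by
      refine Filter.Eventually.of_forall fun t => ?_
      have := hJ t
      simpa [hψdef] using this
    rw [key f hf, hψmin.deriv_eq_zero]
  · intro h t
    obtain ⟨g, hg1, hg2⟩ := exists_dual_vector ℝ z (norm_ne_zero_iff.mpr hz)
    have hg2' : g z = ‖z‖ := by simpa using hg2
    have hgw : g w = 0 := h g ⟨hg1, hg2'⟩
    calc ‖z‖ = g (z + t • w) := by rw [map_add, map_smul, hg2']; simp [hgw]
      _ ≤ ‖g (z + t • w)‖ := le_abs_self _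
      _ ≤ ‖g‖ * ‖z + t • w‖ := g.le_opNorm _
      _ = ‖z + t • w‖ := by rw [hg1, one_mul]
end

section
/- (Lemma 2) Let E be a real Banach space and x, y ∈ E linearly independent. Then the set {α ∈ ℝ : x + α y ⊥ y} is a nonempty closed bounded interval [m, M], and ‖x + α y‖ = ‖x + m y‖ for every α ∈ [m, M]. -/
theorem orthogonality_set_is_closed_interval
    {E : Type*} [NormedAddCommGroup E] [NormedSpace ℝ E] [CompleteSpace E]
    (x y : E) (hxy : LinearIndependent ℝ ![x, y]) :
    ∃ m M : ℝ, m ≤ M ∧ {α : ℝ | JamesOrth (x + α • y) y} = Set.Icc m M ∧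
      ∀ α ∈ Set.Icc m M, ‖x + α • y‖ = ‖x + m • y‖ := by
  have hy : y ≠ 0 := by
    have := hxy.ne_zero 1
    simpa using this
  have hy' : (0:ℝ) < ‖y‖ := norm_pos_iff.mpr hy
  set f : ℝ → ℝ := fun α => ‖x + α • y‖ with hf
  have hfc : Continuous f := by
    apply Continuous.norm
    exact continuous_const.add (continuous_id.smul continuous_const)
  -- coercivity lower bound
  have hlb : ∀ α : ℝ, |α| * ‖y‖ - ‖x‖ ≤ f α := by
    intro α
    have h1 : ‖α • y‖ ≤ ‖x + α • y‖ + ‖x‖ := by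
      have := norm_sub_le (x + α • y) x
      simpa using this
    have h2 : ‖α • y‖ = |α| * ‖y‖ := by rw [norm_smul, Real.norm_eq_abs]
    simp only [hf]
    linarith [h1, h2.symm.le]
  -- convexity inequality
  have hconv : ∀ a b : ℝ, 0 ≤ a → 0 ≤ b → a + b = 1 → ∀ α β : ℝ,
      f (a*α + b*β) ≤ a * f α + b * f β := by
    intro a b ha hb hab α β
    have key : x + (a*α + b*β) • y = a • (x + α • y) + b • (x + β • y) := by
      have hx : x = (a + b) • x := by rw [hab, one_smul]
      rw [smul_add, smul_add, smul_smul, smul_smul]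
      nth_rewrite 1 [hx]
      rw [add_smul, add_smul]
      abel
    simp only [hf]
    rw [key]
    calc ‖a • (x + α • y) + b • (x + β • y)‖
        ≤ ‖a • (x + α • y)‖ + ‖b • (x + β • y)‖ := norm_add_le _ _
      _ = a * ‖x + α • y‖ + b * ‖x + β • y‖ := by
          rw [norm_smul, norm_smul, Real.norm_of_nonneg ha, Real.norm_of_nonneg hb]
  -- existence of a global minimizer
  set R : ℝ := (f 0 + ‖x‖ + 1) / ‖y‖ with hR
  have hRpos : 0 < R := by
    apply div_pos _ hy'
    have : 0 ≤ f 0 := norm_nonneg _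
    positivity
  obtain ⟨α₀, hα₀mem, hα₀min⟩ :=
    (isCompact_Icc (a := -R) (b := R)).exists_isMinOn
      (Set.nonempty_Icc.mpr (by linarith)) hfc.continuousOn
  have h0mem : (0:ℝ) ∈ Set.Icc (-R) R := by constructor <;> linarith
  have hglobal : ∀ t : ℝ, f α₀ ≤ f t := by
    intro t
    by_cases ht : t ∈ Set.Icc (-R) R
    · exact hα₀min ht
    · have hRt : R < |t| := by
        rcases abs_cases t with ⟨h, _⟩ | ⟨h, _⟩
        · rw [h]; by_contra hc; push_neg at hc
          exact ht ⟨by linarith, hc⟩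
        · rw [h]; by_contra hc; push_neg at hc
          exact ht ⟨by linarith, by linarith⟩
      have h1 : |t| * ‖y‖ - ‖x‖ ≤ f t := hlb t
      have h2 : R * ‖y‖ = f 0 + ‖x‖ + 1 := by
        rw [hR, div_mul_cancel₀]; exact ne_of_gt hy'
      have h3 : R * ‖y‖ ≤ |t| * ‖y‖ := by nlinarith
      have h4 : f α₀ ≤ f 0 := hα₀min h0mem
      linarith
  set c : ℝ := f α₀ with hc
  -- identify the orthogonality set with the sublevel set
  set S : Set ℝ := {α : ℝ | JamesOrth (x + α • y) y} with hS
  have hSeq : S = {α : ℝ | f α ≤ c} := by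
    ext α
    simp only [hS, Set.mem_setOf_eq, JamesOrth]
    constructor
    · intro h
      have := h (α₀ - α)
      have heq : x + α • y + (α₀ - α) • y = x + α₀ • y := by
        rw [add_assoc, ← add_smul]; ring_nf
      rw [heq] at this
      exact this
    · intro h β
      have heq : x + α • y + β • y = x + (α + β) • y := by
        rw [add_assoc, ← add_smul]
      rw [heq]
      exact le_trans h (hglobal (α + β))
  have hSclosed : IsClosed S := by rw [hSeq]; exact isClosed_le hfc continuous_const
  have hSne : S.Nonempty := ⟨α₀, by rw [hSeq]; exact le_refl c⟩
  -- boundedness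
  have hSbdd : ∀ α ∈ S, |α| ≤ (c + ‖x‖) / ‖y‖ := by
    intro α hα
    rw [hSeq] at hα
    have h1 := hlb α
    simp only [Set.mem_setOf_eq] at hα
    rw [le_div_iff₀ hy']
    linarith
  have hbddA : BddAbove S := ⟨(c + ‖x‖) / ‖y‖, fun α hα =>
    le_trans (le_abs_self α) (hSbdd α hα)⟩
  have hbddB : BddBelow S := ⟨-((c + ‖x‖) / ‖y‖), fun α hα => by
    have := hSbdd α hα
    have := neg_abs_le α
    linarith⟩
  -- convexity of S
  have hSconv : Convex ℝ S := by
    intro p hp q hq a b ha hb hab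
    rw [hSeq] at hp hq ⊢
    simp only [Set.mem_setOf_eq] at hp hq ⊢
    have := hconv a b ha hb hab p q
    have : f (a * p + b * q) ≤ a * c + b * c := by
      calc f (a*p + b*q) ≤ a * f p + b * f q := hconv a b ha hb hab p q
        _ ≤ a * c + b * c := by
            apply add_le_add
            · exact mul_le_mul_of_nonneg_left hp ha
            · exact mul_le_mul_of_nonneg_left hq hb
    have hcc : a * c + b * c = c := by rw [← add_mul, hab, one_mul]
    simpa [smul_eq_mul, hcc] using this
  set m : ℝ := sInf S with hm
  set M : ℝ := sSup S with hM
  have hmS : m ∈ S := hSclosed.csInf_mem hSne hbddB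
  have hMS : M ∈ S := hSclosed.csSup_mem hSne hbddA
  have hmM : m ≤ M := csInf_le_csSup hSne hbddB hbddA
  refine ⟨m, M, hmM, ?_, ?_⟩
  · apply Set.Subset.antisymm
    · intro α hα
      exact ⟨csInf_le hbddB hα, le_csSup hbddA hα⟩
    · rw [← segment_eq_Icc hmM]
      exact hSconv.segment_subset hmS hMS
  · intro α hα
    have hαS : α ∈ S := by
      rw [← segment_eq_Icc hmM] at hα
      exact hSconv.segment_subset hmS hMS hα
    rw [hSeq] at hαS hmS
    have h1 : f α = c := le_antisymm hαS (hglobal α)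
    have h2 : f m = c := le_antisymm hmS (hglobal m)
    show f α = f m
    rw [h1, h2]
end

section
/- (Lemma 3) Let E be a real Banach space, x, y ∈ E linearly independent, and α ∈ D(x,y). Then either x + α y is James-orthogonal to y, or there exists a unique real number β such that x + α y is James-orthogonal to x − β y. -/
theorem orth_to_y_or_unique_beta
    {E : Type*} [NormedAddCommGroup E] [NormedSpace ℝ E] [CompleteSpace E]
    (x y : E) (hxy : LinearIndependent ℝ ![x, y]) (α : ℝ)
    (hα : DifferentiableAt ℝ (fun t : ℝ => ‖x + t • y‖) α) :
    JamesOrth (x + α • y) y ∨ ∃! β : ℝ, JamesOrth (x + α • y) (x - β • y) := by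
  classical
  set z : E := x + α • y with hz_def
  have hz_ne : z ≠ 0 := by
    intro h
    have := (LinearIndependent.pair_iff.mp hxy) 1 α (by simpa [hz_def] using h)
    exact one_ne_zero this.1
  set c : ℝ := deriv (fun t : ℝ => ‖x + t • y‖) α with hc_def
  have h1 : HasDerivAt (fun t : ℝ => ‖x + t • y‖) c α := hα.hasDerivAt
  obtain ⟨f, hf1, hf2⟩ := exists_dual_vector ℝ z (norm_ne_zero_iff.mpr hz_ne)
  have hle : ∀ w : E, f w ≤ ‖w‖ := by
    intro w
    calc f w ≤ |f w| := le_abs_self _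
    _ ≤ ‖f‖ * ‖w‖ := f.le_opNorm w
    _ = ‖w‖ := by rw [hf1, one_mul]
  -- f y = c
  have hfz : f x + α * f y = ‖z‖ := by
    have h' : f z = f x + α * f y := by simp [hz_def, map_add, map_smul, smul_eq_mul]
    rw [← h']
    exact_mod_cast hf2
  have hfy : f y = c := by
    have haff : HasDerivAt (fun t : ℝ => f x + t * f y) (f y) α := by
      simpa using ((hasDerivAt_id α).mul_const (f y)).const_add (f x)
    have hd : HasDerivAt (fun t : ℝ => ‖x + t • y‖ - (f x + t * f y)) (c - f y) α :=
      h1.sub haff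
    have hmin : IsLocalMin (fun t : ℝ => ‖x + t • y‖ - (f x + t * f y)) α := by
      apply Filter.Eventually.of_forall
      intro t
      have h1' : f x + t * f y ≤ ‖x + t • y‖ := by
        have := hle (x + t • y)
        simpa [map_add, map_smul, smul_eq_mul] using this
      have h2' : ‖x + α • y‖ - (f x + α * f y) = 0 := by
        rw [hfz]; simp [hz_def]
      simp only [h2']
      linarith
    have := hmin.hasDerivAt_eq_zero hd
    linarith
  by_cases hc : c = 0
  · -- z ⊥ y
    left
    intro a
    have : f (z + a • y) = ‖z‖ := by
      simp [map_add, map_smul, smul_eq_mul, hf2, hfy, hc]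
    calc ‖z‖ = f (z + a • y) := this.symm
    _ ≤ ‖z + a • y‖ := hle _
  · right
    refine ⟨‖z‖ / c - α, ?_, ?_⟩
    · -- existence
      intro a
      have hf0 : f (x - (‖z‖ / c - α) • y) = 0 := by
        have : f (x - (‖z‖ / c - α) • y) = f x - (‖z‖ / c - α) * f y := by
          simp [map_sub, map_smul, smul_eq_mul]
        rw [this, hfy]
        have : f x = ‖z‖ - α * c := by rw [hfy] at hfz; linarith
        rw [this]
        field_simp
        ring
      have : f (z + a • (x - (‖z‖ / c - α) • y)) = ‖z‖ := by
        simp [map_add, map_smul, smul_eq_mul, hf2, hf0]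
      calc ‖z‖ = f (z + a • (x - (‖z‖ / c - α) • y)) := this.symm
      _ ≤ _ := hle _
    · -- uniqueness
      intro β' hβ'
      set a : ℝ := α + β' with ha_def
      -- the auxiliary function
      set H : ℝ → ℝ := fun t => (1 + t) * ‖x + (α - t * a / (1 + t)) • y‖ with hH_def
      have hu : HasDerivAt (fun t : ℝ => t * a) a 0 := by
        simpa using (hasDerivAt_id (0:ℝ)).mul_const a
      have hv : HasDerivAt (fun t : ℝ => 1 + t) 1 0 := by
        simpa using (hasDerivAt_id (0:ℝ)).const_add 1
      have hdiv : HasDerivAt (fun t : ℝ => t * a / (1 + t)) a 0 := by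
        have := hu.div hv (by norm_num)
        exact this.congr_deriv (by norm_num)
      have hρ : HasDerivAt (fun t : ℝ => α - t * a / (1 + t)) (-a) 0 := by
        simpa using hdiv.const_sub α
      have hcomp : HasDerivAt (fun t : ℝ => ‖x + (α - t * a / (1 + t)) • y‖) (c * (-a)) 0 := by
        have h1' : HasDerivAt (fun s : ℝ => ‖x + s • y‖) c ((fun t : ℝ => α - t * a / (1 + t)) 0) := by
          simpa using h1
        simpa [Function.comp_def] using h1'.comp 0 hρ
      have hH : HasDerivAt H (1 * ‖x + (α - (0:ℝ) * a / (1 + 0)) • y‖ + (1 + 0) * (c * (-a))) 0 :=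
        hv.mul hcomp
      have hH' : HasDerivAt H (‖z‖ - a * c) 0 := by
        convert hH using 1
        simp [hz_def]
        ring
      have hloc : IsLocalMin H 0 := by
        filter_upwards [Ioo_mem_nhds (by norm_num : (-1:ℝ) < 0) (by norm_num : (0:ℝ) < 1)] with t ht
        have h1t : (0:ℝ) < 1 + t := by linarith [ht.1]
        have hkey : z + t • (x - β' • y) = (1 + t) • (x + (α - t * a / (1 + t)) • y) := by
          rw [smul_add, smul_smul]
          have hs : (1 + t) * (α - t * a / (1 + t)) = α - t * β' := by
            field_simp [ha_def]
            ring
          rw [hs, hz_def]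
          module
        have hHt : H t = ‖z + t • (x - β' • y)‖ := by
          rw [hH_def]
          simp only [hkey, norm_smul, Real.norm_eq_abs, abs_of_pos h1t]
        have hH0 : H 0 = ‖z‖ := by simp [hH_def, hz_def]
        rw [hH0, hHt]
        exact hβ' t
      have hzero := hloc.hasDerivAt_eq_zero hH'
      have hac : α * c + β' * c = ‖z‖ := by
        rw [ha_def] at hzero
        linear_combination -hzero
      have : β' = ‖z‖ / c - α := by
        field_simp
        linarith [hac]
      exact this
end

section
/- Let E be a real Banach space, x, y ∈ E linearly independent, and let [m, M] be the nonempty closed bounded interval {α ∈ ℝ : x + α y ⊥ y}. Suppose α > M, the function φ(t) = ‖x + t y‖ is differentiable at α, and β is a real number such that x + α y ⊥ x − β y. Then α + β ≠ 0 and the derivative φ'(α) equals ‖x + α y‖ / (α + β). -/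
theorem deriv_of_norm_eq_norm_div_alpha_add_beta
    {E : Type*} [NormedAddCommGroup E] [NormedSpace ℝ E] [CompleteSpace E]
    (x y : E) (hxy : LinearIndependent ℝ ![x, y]) (m M : ℝ) (hmM : m ≤ M)
    (hIcc : {α : ℝ | JamesOrth (x + α • y) y} = Set.Icc m M)
    (α : ℝ) (hα : M < α)
    (hdiff : DifferentiableAt ℝ (fun t : ℝ => ‖x + t • y‖) α)
    (β : ℝ) (hβ : JamesOrth (x + α • y) (x - β • y)) :
    α + β ≠ 0 ∧ deriv (fun t : ℝ => ‖x + t • y‖) α = ‖x + α • y‖ / (α + β) := by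
  have hz : x + α • y ≠ 0 := by
    intro h
    have hxy' := linearIndependent_fin2.1 hxy
    simp only [Matrix.cons_val_one, Matrix.head_cons, Matrix.cons_val_zero] at hxy'
    have hx : x = -(α • y) := by rw [eq_neg_iff_add_eq_zero]; exact h
    exact hxy'.2 (-α) (by rw [neg_smul]; exact hx.symm)
  have hpos : 0 < ‖x + α • y‖ := norm_pos_iff.2 hz
  have hne : α + β ≠ 0 := by
    intro h0
    have h1 := hβ (-1)
    have heq : (x + α • y) + (-1 : ℝ) • (x - β • y) = (α + β) • y := by module
    rw [heq, h0, zero_smul, norm_zero] at h1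
    linarith
  have hkey : ∀ s : ℝ, |s| < |α + β| →
      ‖x + α • y‖ + (‖x + α • y‖ / (α + β)) * s ≤ ‖x + (α + s) • y‖ := by
    intro s hs
    have hs' := abs_lt.1 hs
    have hprod : 0 < (α + β + s) * (α + β) := by
      rcases hne.lt_or_gt with h | h
      · nlinarith [abs_of_neg h]
      · nlinarith [abs_of_pos h]
    have hd : α + β + s ≠ 0 := by
      intro h; rw [h, zero_mul] at hprod; exact lt_irrefl 0 hprod
    have h3 : 0 < (α + β) / (α + β + s) := by
      rcases mul_pos_iff.1 hprod with ⟨h1, h2⟩ | ⟨h1, h2⟩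
      · exact div_pos h2 h1
      · exact div_pos_of_neg_of_neg h2 h1
    have h4 : 0 < (α + β + s) / (α + β) := by
      rcases mul_pos_iff.1 hprod with ⟨h1, h2⟩ | ⟨h1, h2⟩
      · exact div_pos h1 h2
      · exact div_pos_of_neg_of_neg h1 h2
    have h2 := hβ (-s / (α + β + s))
    have heq : (x + α • y) + (-s / (α + β + s)) • (x - β • y)
        = ((α + β) / (α + β + s)) • (x + (α + s) • y) := by
      match_scalars <;> field_simp <;> ring
    rw [heq, norm_smul, Real.norm_eq_abs, abs_of_pos h3] at h2
    have h5 := mul_le_mul_of_nonneg_right h2 h4.le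
    have h6 : ((α + β) / (α + β + s) * ‖x + (α + s) • y‖) * ((α + β + s) / (α + β))
        = ‖x + (α + s) • y‖ := by field_simp
    rw [h6] at h5
    have h7 : ‖x + α • y‖ * ((α + β + s) / (α + β))
        = ‖x + α • y‖ + (‖x + α • y‖ / (α + β)) * s := by field_simp
    linarith [h7 ▸ h5]
  -- derivative via local min
  set c : ℝ := ‖x + α • y‖ / (α + β) with hc
  have hfa : HasDerivAt (fun t : ℝ => ‖x + t • y‖) (deriv (fun t : ℝ => ‖x + t • y‖) α) α :=
    hdiff.hasDerivAt
  have hshift : HasDerivAt (fun s : ℝ => ‖x + (α + s) • y‖)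
      (deriv (fun t : ℝ => ‖x + t • y‖) α) 0 := by
    have h1 : HasDerivAt (fun s : ℝ => α + s) 1 0 := (hasDerivAt_id 0).const_add α
    have hfa0 : HasDerivAt (fun t : ℝ => ‖x + t • y‖) (deriv (fun t : ℝ => ‖x + t • y‖) α)
        ((fun s : ℝ => α + s) 0) := by simpa using hfa
    have h2 := hfa0.comp 0 h1
    simpa [Function.comp_def] using h2
  have hg : HasDerivAt (fun s : ℝ => ‖x + (α + s) • y‖ - ‖x + α • y‖ - c * s)
      (deriv (fun t : ℝ => ‖x + t • y‖) α - c) 0 := by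
    have hlin : HasDerivAt (fun s : ℝ => c * s) c 0 := by
      simpa using (hasDerivAt_id (0:ℝ)).const_mul c
    exact (hshift.sub_const (‖x + α • y‖)).sub hlin
  have hmin : IsLocalMin (fun s : ℝ => ‖x + (α + s) • y‖ - ‖x + α • y‖ - c * s) 0 := by
    filter_upwards [Metric.ball_mem_nhds (0:ℝ) (abs_pos.2 hne)] with s hs
    have hs' : |s| < |α + β| := by simpa [Real.dist_eq] using hs
    have := hkey s hs'
    simp only [add_zero, mul_zero]
    linarith
  have h0 := hmin.hasDerivAt_eq_zero hg
  exact ⟨hne, by linarith⟩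
end

section
/- (Lemma 4, formula (2)) Let E be a real Banach space, x, y ∈ E linearly independent, let [m, M] be the nonempty closed bounded interval {α ∈ ℝ : x + α y ⊥ y}, and let f : ℝ → ℝ be a function such that for almost every t > M (with respect to Lebesgue measure), x + t y is James-orthogonal to x − f(t) y. Then for every α > M, ‖x + α y‖ = ‖x + M y‖ · exp( ∫_M^α (t + f(t))⁻¹ dt ). -/
open MeasureTheory

section Aux
open Filter Set intervalIntegral

lemma abs_log_sub_log_le {a b c : ℝ} (hc : 0 < c) (ha : c ≤ a) (hb : c ≤ b) :
    |Real.log a - Real.log b| ≤ |a - b| / c := by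
  have key : ∀ u v : ℝ, c ≤ u → c ≤ v → v ≤ u → Real.log u - Real.log v ≤ (u - v) / c := by
    intro u v hu hv hvu
    have hv0 : 0 < v := lt_of_lt_of_le hc hv
    have h1 : Real.log u - Real.log v = Real.log (u / v) := (Real.log_div (by linarith) (by linarith)).symm
    rw [h1]
    have h2 : Real.log (u / v) ≤ u / v - 1 := Real.log_le_sub_one_of_pos (div_pos (by linarith) hv0)
    have h3 : u / v - 1 = (u - v) / v := by field_simp
    have h4 : (u - v) / v ≤ (u - v) / c := by
      apply div_le_div_of_nonneg_left (by linarith) hc hv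
    linarith
  rcases le_total b a with hba | hab
  · rw [abs_of_nonneg (sub_nonneg.mpr (Real.log_le_log (by linarith) hba)),
      abs_of_nonneg (by linarith)]
    exact key a b ha hb hba
  · rw [abs_sub_comm (Real.log a), abs_sub_comm a b,
      abs_of_nonneg (sub_nonneg.mpr (Real.log_le_log (by linarith) hab)),
      abs_of_nonneg (by linarith)]
    exact key b a hb ha hab

/-- FTC for Lipschitz functions with an a.e. derivative. -/
lemma lipschitz_ftc {h : ℝ → ℝ} {L : NNReal} (hL : LipschitzWith L h)
    {a b : ℝ} (hab : a ≤ b) {ψ : ℝ → ℝ} (hψm : Measurable ψ)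
    (hψ : ∀ᵐ t ∂(volume : Measure ℝ), t ∈ Set.Ioc a b → HasDerivAt h (ψ t) t) :
    ∫ t in a..b, ψ t = h b - h a := by
  have hcont : Continuous h := hL.continuous
  set δ : ℕ → ℝ := fun n => ((n : ℝ) + 1)⁻¹ with hδ
  have hδpos : ∀ n, 0 < δ n := fun n => by positivity
  have hδ0 : Tendsto δ atTop (nhds 0) := by
    apply tendsto_inv_atTop_zero.comp
    exact tendsto_atTop_add_const_right _ 1 tendsto_natCast_atTop_atTop
  set G : ℕ → ℝ → ℝ := fun n t => (h (t + δ n) - h t) / δ n with hG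
  -- Lipschitz bound on G
  have hGbound : ∀ n t, |G n t| ≤ L := by
    intro n t
    have h1 : |h (t + δ n) - h t| ≤ L * |t + δ n - t| := by
      simpa [Real.dist_eq] using hL.dist_le_mul (t + δ n) t
    rw [hG, abs_div, abs_of_pos (hδpos n)]
    rw [div_le_iff₀ (hδpos n)]
    calc |h (t + δ n) - h t| ≤ L * |t + δ n - t| := h1
      _ = L * δ n := by rw [add_sub_cancel_left, abs_of_pos (hδpos n)]
  -- Claim A : integrals of G n tend to h b - h a
  have hint : ∀ c d : ℝ, IntervalIntegrable h volume c d := fun c d =>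
    hcont.intervalIntegrable c d
  have claimA : Tendsto (fun n => ∫ t in a..b, G n t) atTop (nhds (h b - h a)) := by
    have key : ∀ n, |(∫ t in a..b, G n t) - (h b - h a)| ≤ 2 * L * δ n := by
      intro n
      have e1 : ∫ t in a..b, G n t
          = ((∫ t in b..(b + δ n), h t) - ∫ t in a..(a + δ n), h t) / δ n := by
        rw [hG]
        simp only [div_eq_mul_inv]
        rw [intervalIntegral.integral_mul_const]
        congr 1
        have hsub : (∫ t in a..b, (h (t + δ n) - h t))
            = (∫ t in a..b, h (t + δ n)) - ∫ t in a..b, h t :=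
          intervalIntegral.integral_sub ((hcont.comp (continuous_id.add continuous_const)).intervalIntegrable a b) (hint a b)
        rw [hsub, intervalIntegral.integral_comp_add_right h (δ n)]
        have A1 : (∫ t in (a + δ n)..(b + δ n), h t)
            = (∫ t in (a + δ n)..b, h t) + ∫ t in b..(b + δ n), h t :=
          (integral_add_adjacent_intervals (hint _ _) (hint _ _)).symm
        have A2 : (∫ t in a..b, h t)
            = (∫ t in a..(a + δ n), h t) + ∫ t in (a + δ n)..b, h t :=
          (integral_add_adjacent_intervals (hint _ _) (hint _ _)).symm
        rw [A1, A2]; ring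
      -- estimate each near-endpoint average
      have e2 : ∀ c : ℝ, |(∫ t in c..(c + δ n), h t) - h c * δ n| ≤ L * δ n * δ n := by
        intro c
        have : (∫ t in c..(c + δ n), h t) - h c * δ n
            = ∫ t in c..(c + δ n), (h t - h c) := by
          rw [intervalIntegral.integral_sub (hint _ _)
            (intervalIntegrable_const)]
          simp [mul_comm]
        rw [this]
        have := intervalIntegral.norm_integral_le_of_norm_le_const
          (a := c) (b := c + δ n) (C := L * δ n) (f := fun t => h t - h c) ?_
        · calc |∫ t in c..(c + δ n), (h t - h c)| ≤ (L * δ n) * |c + δ n - c| := this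
            _ = L * δ n * δ n := by rw [add_sub_cancel_left, abs_of_pos (hδpos n)]
        · intro x hx
          rw [Set.uIoc_of_le (by linarith [hδpos n])] at hx
          have h1 : |h x - h c| ≤ L * |x - c| := by
            simpa [Real.dist_eq] using hL.dist_le_mul x c
          have h2 : |x - c| ≤ δ n := by
            rw [abs_of_pos (by linarith [hx.1])]
            linarith [hx.2]
          calc ‖h x - h c‖ ≤ L * |x - c| := h1
            _ ≤ L * δ n := by
              exact mul_le_mul_of_nonneg_left h2 L.coe_nonneg
      have E2b := e2 b
      have E2a := e2 a
      have hδn := hδpos n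
      have ineq : |(∫ t in a..b, G n t) - (h b - h a)|
          ≤ (L * δ n * δ n + L * δ n * δ n) / δ n := by
        rw [e1]
        have : ((∫ t in b..(b + δ n), h t) - ∫ t in a..(a + δ n), h t) / δ n - (h b - h a)
            = (((∫ t in b..(b + δ n), h t) - h b * δ n)
              - ((∫ t in a..(a + δ n), h t) - h a * δ n)) / δ n := by
          field_simp
          ring
        rw [this, abs_div, abs_of_pos hδn, div_le_div_iff_of_pos_right hδn]
        calc |((∫ t in b..(b + δ n), h t) - h b * δ n)
              - ((∫ t in a..(a + δ n), h t) - h a * δ n)|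
            ≤ |(∫ t in b..(b + δ n), h t) - h b * δ n|
              + |(∫ t in a..(a + δ n), h t) - h a * δ n| := abs_sub _ _
          _ ≤ L * δ n * δ n + L * δ n * δ n := add_le_add E2b E2a
      calc |(∫ t in a..b, G n t) - (h b - h a)|
          ≤ (L * δ n * δ n + L * δ n * δ n) / δ n := ineq
        _ = 2 * L * δ n := by field_simp; ring
    have hb0 : Tendsto (fun n => 2 * (L : ℝ) * δ n) atTop (nhds 0) := by
      simpa using hδ0.const_mul (2 * (L : ℝ))
    have : Tendsto (fun n => (∫ t in a..b, G n t) - (h b - h a)) atTop (nhds 0) :=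
      squeeze_zero_norm (fun n => key n) hb0
    simpa using this.add_const (h b - h a)
  -- Claim B : integrals of G n tend to the integral of ψ
  have claimB : Tendsto (fun n => ∫ t in a..b, G n t) atTop
      (nhds (∫ t in a..b, ψ t)) := by
    simp only [intervalIntegral.integral_of_le hab]
    apply MeasureTheory.tendsto_integral_of_dominated_convergence
      (bound := fun _ => (L : ℝ))
    · intro n
      exact ((hcont.comp (continuous_id.add continuous_const)).sub hcont |>.div_const
        (δ n)).aestronglyMeasurable.restrict
    · exact integrable_const _
    · intro n
      exact Eventually.of_forall fun t => by
        simpa [Real.norm_eq_abs] using hGbound n t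
    · have h1 : ∀ᵐ t ∂(volume.restrict (Set.Ioc a b)), t ∈ Set.Ioc a b → HasDerivAt h (ψ t) t :=
        ae_restrict_of_ae hψ
      have h2 : ∀ᵐ t ∂(volume.restrict (Set.Ioc a b)), t ∈ Set.Ioc a b :=
        ae_restrict_mem measurableSet_Ioc
      filter_upwards [h1, h2] with t ht hmem
      have hder := ht hmem
      rw [hasDerivAt_iff_tendsto_slope] at hder
      have hseq : Tendsto (fun n => t + δ n) atTop (nhdsWithin t {t}ᶜ) := by
        apply tendsto_nhdsWithin_of_tendsto_nhds_of_eventually_within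
        · simpa using (tendsto_const_nhds.add hδ0)
        · exact Eventually.of_forall fun n => by
            simp only [Set.mem_compl_iff, Set.mem_singleton_iff]
            intro hc
            have := hδpos n
            linarith [hc ▸ (by linarith : t < t + δ n)]
      have := hder.comp hseq
      convert this using 2 with n
      simp [hG, slope, add_sub_cancel_left, vsub_eq_sub, div_eq_inv_mul]
  exact tendsto_nhds_unique claimB claimA

end Aux

theorem norm_formula_right_of_M
    {E : Type*} [NormedAddCommGroup E] [NormedSpace ℝ E] [CompleteSpace E]
    (x y : E) (hxy : LinearIndependent ℝ ![x, y]) (m M : ℝ) (hmM : m ≤ M)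
    (hIcc : {α : ℝ | JamesOrth (x + α • y) y} = Set.Icc m M)
    (f : ℝ → ℝ)
    (hf : ∀ᵐ t ∂(volume : Measure ℝ), M < t → JamesOrth (x + t • y) (x - f t • y)) :
    ∀ α : ℝ, M < α →
      ‖x + α • y‖ = ‖x + M • y‖ * Real.exp (∫ t in M..α, (t + f t)⁻¹) := by
  set φ : ℝ → ℝ := fun t => ‖x + t • y‖ with hφ
  -- Basic facts
  have hJM : JamesOrth (x + M • y) y := by
    have hM : M ∈ Set.Icc m M := ⟨hmM, le_refl M⟩
    rw [← hIcc] at hM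
    exact hM
  have haffine : ∀ s β : ℝ, x + s • y + β • y = x + (s + β) • y := by
    intro s β; module
  have hmin : ∀ s, φ M ≤ φ s := by
    intro s
    have := hJM (s - M)
    rw [haffine] at this
    simpa using this
  have hne : x + M • y ≠ 0 := by
    rw [linearIndependent_fin2] at hxy
    simp only [Matrix.cons_val_one, Matrix.head_cons, Matrix.cons_val_zero] at hxy
    intro hc
    apply hxy.2 (-M)
    have : x = -(M • y) := by
      rw [← sub_eq_zero]; rw [← hc]; abel
    rw [this, neg_smul]
  have hφMpos : 0 < φ M := norm_pos_iff.mpr hne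
  have hφpos : ∀ s, 0 < φ s := fun s => lt_of_lt_of_le hφMpos (hmin s)
  have hstrict : ∀ t, M < t → φ M < φ t := by
    intro t ht
    have hnot : t ∉ Set.Icc m M := fun hc => absurd hc.2 (not_le.mpr ht)
    rw [← hIcc] at hnot
    simp only [JamesOrth, Set.mem_setOf_eq, not_forall, not_le] at hnot
    obtain ⟨β, hβ⟩ := hnot
    rw [haffine] at hβ
    exact lt_of_le_of_lt (hmin (t + β)) hβ
  have hLip : LipschitzWith ‖y‖₊ φ := by
    apply LipschitzWith.of_dist_le_mul
    intro s t
    rw [Real.dist_eq, Real.dist_eq]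
    have h1 : |φ s - φ t| ≤ ‖(x + s • y) - (x + t • y)‖ := abs_norm_sub_norm_le _ _
    have h2 : (x + s • y) - (x + t • y) = (s - t) • y := by module
    rw [h2, norm_smul, Real.norm_eq_abs] at h1
    calc |φ s - φ t| ≤ |s - t| * ‖y‖ := h1
      _ = ‖y‖ * |s - t| := mul_comm _ _
  set h : ℝ → ℝ := fun t => Real.log (φ t) with hh
  have hLLip : LipschitzWith (‖y‖₊ * ⟨(φ M)⁻¹, inv_nonneg.mpr hφMpos.le⟩) h := by
    apply LipschitzWith.of_dist_le_mul
    intro s t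
    rw [Real.dist_eq, Real.dist_eq]
    have h1 : |Real.log (φ s) - Real.log (φ t)| ≤ |φ s - φ t| / φ M :=
      abs_log_sub_log_le hφMpos (hmin s) (hmin t)
    have h2 : |φ s - φ t| ≤ ‖y‖ * |s - t| := by
      have := hLip.dist_le_mul s t
      rwa [Real.dist_eq, Real.dist_eq] at this
    have h3 : |φ s - φ t| / φ M ≤ (‖y‖ * |s - t|) / φ M := by
      gcongr
    calc |h s - h t| ≤ (‖y‖ * |s - t|) / φ M := le_trans h1 h3
      _ = (‖y‖₊ * (⟨(φ M)⁻¹, inv_nonneg.mpr hφMpos.le⟩ : NNReal) : ℝ) * |s - t| := by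
        push_cast
        field_simp
  have hdiff : ∀ᵐ t ∂(volume : Measure ℝ), DifferentiableAt ℝ φ t :=
    hLip.ae_differentiableAt_of_real
  -- pointwise key lemma
  have key : ∀ t, M < t → JamesOrth (x + t • y) (x - f t • y) → DifferentiableAt ℝ φ t →
      HasDerivAt h ((t + f t)⁻¹) t := by
    intro t ht hJ hd
    set c : ℝ := t + f t with hc
    have hcnz : c ≠ 0 := by
      intro hc0
      have h1 := hJ (-1)
      have h2 : x + t • y + (-1 : ℝ) • (x - f t • y) = c • y := by
        rw [hc]; module
      rw [h2, hc0, zero_smul, norm_zero] at h1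
      exact absurd h1 (not_le.mpr (hφpos t))
    have hb : ∀ s, φ t * |s + f t| ≤ φ s * |c| := by
      intro s
      by_cases hs : s + f t = 0
      · rw [hs, abs_zero, mul_zero]
        positivity
      · set β : ℝ := (t - s) / (s + f t) with hβ
        have h1 : (1 : ℝ) + β = c / (s + f t) := by
          rw [hβ, hc]; field_simp; ring
        have h2 : t - β * f t = (c / (s + f t)) * s := by
          rw [hβ, hc]; field_simp; ring
        have hveq : x + t • y + β • (x - f t • y) = (c / (s + f t)) • (x + s • y) := by
          calc x + t • y + β • (x - f t • y)
              = ((1 : ℝ) + β) • x + (t - β * f t) • y := by module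
            _ = (c / (s + f t)) • x + ((c / (s + f t)) * s) • y := by rw [h1, h2]
            _ = (c / (s + f t)) • (x + s • y) := by module
        have h3 := hJ β
        rw [hveq, norm_smul, Real.norm_eq_abs, abs_div] at h3
        have habs : 0 < |s + f t| := abs_pos.mpr hs
        calc φ t * |s + f t| ≤ (|c| / |s + f t| * φ s) * |s + f t| :=
              mul_le_mul_of_nonneg_right h3 (abs_nonneg _)
          _ = φ s * |c| := by field_simp
    have hcpos : 0 < c := by
      rcases hcnz.lt_or_gt with hneg | hpos
      · exfalso
        have h1 := hb M
        have hMft : M + f t < 0 := by rw [hc] at hneg; linarith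
        rw [abs_of_neg hMft, abs_of_neg hneg] at h1
        have h4 := hstrict t ht
        have h5 := hφpos t
        have h6 : M + f t ≤ c := by rw [hc]; linarith
        nlinarith
      · exact hpos
    have hsupp : ∀ s, φ t + (φ t / c) * (s - t) ≤ φ s := by
      intro s
      have h2 : φ t * (s + f t) ≤ φ s * c := by
        calc φ t * (s + f t) ≤ φ t * |s + f t| :=
              mul_le_mul_of_nonneg_left (le_abs_self _) (hφpos t).le
          _ ≤ φ s * |c| := hb s
          _ = φ s * c := by rw [abs_of_pos hcpos]
      rw [← sub_nonneg]
      have hexp : φ s - (φ t + (φ t / c) * (s - t)) = (φ s * c - φ t * (s + f t)) / c := by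
        rw [hc] at hcnz ⊢; field_simp; ring
      rw [hexp]
      exact div_nonneg (by linarith) hcpos.le
    have hφt : HasDerivAt φ (φ t / c) t := by
      have hq : IsLocalMin (fun s => φ s - (φ t / c) * (s - t)) t := by
        apply Filter.Eventually.of_forall
        intro s
        have := hsupp s
        simp only
        linarith
      have hlin : HasDerivAt (fun s : ℝ => (φ t / c) * (s - t)) (φ t / c) t := by
        simpa using ((hasDerivAt_id t).sub_const t).const_mul (φ t / c)
      have hder : HasDerivAt (fun s => φ s - (φ t / c) * (s - t))
          (deriv φ t - φ t / c) t := hd.hasDerivAt.sub hlin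
      have h0 := hq.deriv_eq_zero
      rw [hder.deriv] at h0
      have : deriv φ t = φ t / c := by linarith
      rw [← this]
      exact hd.hasDerivAt
    have hlog := hφt.log (ne_of_gt (hφpos t))
    have : (φ t / c) / φ t = c⁻¹ := by
      rw [div_div, mul_comm, ← div_div, div_self (ne_of_gt (hφpos t)), one_div]
    rw [this] at hlog
    exact hlog
  intro α hα
  have hae : ∀ᵐ t ∂(volume : Measure ℝ), t ∈ Set.Ioc M α → HasDerivAt h ((t + f t)⁻¹) t := by
    filter_upwards [hf, hdiff] with t h1 h2 hmem
    exact key t hmem.1 (h1 hmem.1) h2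
  have hcongr : (∫ t in M..α, (t + f t)⁻¹) = ∫ t in M..α, deriv h t := by
    apply intervalIntegral.integral_congr_ae
    rw [Set.uIoc_of_le hα.le]
    filter_upwards [hae] with t ht hmem
    exact ((ht hmem).deriv).symm
  have hψ : ∀ᵐ t ∂(volume : Measure ℝ), t ∈ Set.Ioc M α → HasDerivAt h (deriv h t) t := by
    filter_upwards [hae] with t ht hmem
    exact ((ht hmem).differentiableAt).hasDerivAt
  have hftc := lipschitz_ftc hLLip hα.le (measurable_deriv h) hψ
  rw [hcongr, hftc]
  show φ α = φ M * Real.exp (h α - h M)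
  rw [hh]
  simp only
  rw [Real.exp_sub, Real.exp_log (hφpos α), Real.exp_log (hφpos M)]
  field_simp
end

section
/- (Lemma 4, formula (3)) Let E be a real Banach space, x, y ∈ E linearly independent, let [m, M] be the nonempty closed bounded interval {α ∈ ℝ : x + α y ⊥ y}, and let f : ℝ → ℝ be a function such that for almost every t < m (with respect to Lebesgue measure), x + t y is James-orthogonal to x − f(t) y. Then for every α < m, ‖x + α y‖ = ‖x + m y‖ · exp( − ∫_α^m (t + f(t))⁻¹ dt ). -/
open MeasureTheory Set Filter Topology

theorem norm_formula_left_of_m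
    {E : Type*} [NormedAddCommGroup E] [NormedSpace ℝ E] [CompleteSpace E]
    (x y : E) (hxy : LinearIndependent ℝ ![x, y]) (m M : ℝ) (hmM : m ≤ M)
    (hIcc : {α : ℝ | JamesOrth (x + α • y) y} = Set.Icc m M)
    (f : ℝ → ℝ)
    (hf : ∀ᵐ t ∂(volume : Measure ℝ), t < m → JamesOrth (x + t • y) (x - f t • y)) :
    ∀ α : ℝ, α < m →
      ‖x + α • y‖ = ‖x + m • y‖ * Real.exp (-∫ t in α..m, (t + f t)⁻¹) := by
  set φ : ℝ → ℝ := fun t => ‖x + t • y‖ with hφdef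
  have hφcont : Continuous φ := by
    apply continuous_norm.comp
    exact continuous_const.add (continuous_id.smul continuous_const)
  have hne : ∀ t : ℝ, x + t • y ≠ 0 := by
    intro t h
    have h2 := (linearIndependent_fin2.mp hxy).2 (-t)
    simp only [Matrix.cons_val_one, Matrix.head_cons, Matrix.cons_val_zero] at h2
    exact h2 ((neg_smul t y).trans (eq_neg_of_add_eq_zero_left h).symm)
  have hpos : ∀ t : ℝ, 0 < φ t := fun t => norm_pos_iff.mpr (hne t)
  -- convexity of φ
  have hconv : ConvexOn ℝ univ φ := by
    refine ⟨convex_univ, fun s _ t _ a b ha hb hab => ?_⟩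
    simp only [smul_eq_mul]
    have key : x + (a * s + b * t) • y = a • (x + s • y) + b • (x + t • y) := by
      have h : a • (x + s • y) + b • (x + t • y)
          = (a + b) • x + (a * s + b * t) • y := by module
      rw [h, hab, one_smul]
    calc φ (a * s + b * t) = ‖a • (x + s • y) + b • (x + t • y)‖ := by
          show ‖x + (a * s + b * t) • y‖ = _
          rw [key]
      _ ≤ ‖a • (x + s • y)‖ + ‖b • (x + t • y)‖ := norm_add_le _ _
      _ = a * φ s + b * φ t := by
          rw [norm_smul, norm_smul, Real.norm_of_nonneg ha, Real.norm_of_nonneg hb]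
      _ = a • φ s + b • φ t := rfl
  -- m is a global minimum of φ
  have hmin : ∀ u : ℝ, φ m ≤ φ u := by
    intro u
    have hm : JamesOrth (x + m • y) y := by
      have h1 : m ∈ Icc m M := ⟨le_rfl, hmM⟩
      rw [← hIcc] at h1; exact h1
    have e : x + m • y + (u - m) • y = x + u • y := by module
    have := hm (u - m)
    rw [e] at this
    exact this
  have horthmin : ∀ s : ℝ, (∀ u : ℝ, φ s ≤ φ u) → m ≤ s := by
    intro s hs
    have hJ : JamesOrth (x + s • y) y := by
      intro β
      have e : x + s • y + β • y = x + (s + β) • y := by module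
      rw [e]; exact hs (s + β)
    have h1 : s ∈ {α : ℝ | JamesOrth (x + α • y) y} := hJ
    rw [hIcc] at h1; exact h1.1
  -- strict decrease on the left of m
  have hltm : ∀ s : ℝ, s < m → φ m < φ s := by
    intro s hs
    refine lt_of_le_of_ne (hmin s) fun h => absurd (horthmin s fun u => h ▸ hmin u) (not_le.2 hs)
  have hdec : ∀ s t : ℝ, s < t → t ≤ m → φ t < φ s := by
    intro s t hst htm
    rcases eq_or_lt_of_le htm with rfl | htm'
    · exact hltm s hst
    · have hsm : s < m := hst.trans htm'
      have hms : (0:ℝ) < m - s := by linarith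
      obtain ⟨a, b, ha, hb, hab, hcomb⟩ :
          ∃ a b : ℝ, 0 < a ∧ 0 < b ∧ a + b = 1 ∧ a • s + b • m = t := by
        refine ⟨(m - t)/(m - s), (t - s)/(m - s), div_pos (by linarith) hms,
          div_pos (by linarith) hms, by field_simp; ring, ?_⟩
        simp only [smul_eq_mul]
        field_simp
        ring
      have h1 := hconv.2 (mem_univ s) (mem_univ m) ha.le hb.le hab
      rw [hcomb] at h1
      have h2 : φ m < φ s := hltm s hsm
      simp only [smul_eq_mul] at h1
      have h3 : a * φ s + b * φ s = φ s := by rw [← add_mul, hab, one_mul]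
      nlinarith [mul_pos hb (sub_pos.2 h2)]
  -- the key inequality coming from James orthogonality
  have hstar : ∀ t u : ℝ, JamesOrth (x + t • y) (x - f t • y) → u + f t ≠ 0 →
      φ t * |u + f t| ≤ |t + f t| * φ u := by
    intro t u ho hu
    set β : ℝ := (t - u) / (u + f t) with hβ
    set K : ℝ := (t + f t) / (u + f t) with hK
    have hKβ : 1 + β = K := by rw [hβ, hK]; field_simp; ring
    have hKu : t - β * f t = K * u := by rw [hβ, hK]; field_simp; ring
    have e : x + t • y + β • (x - f t • y) = K • (x + u • y) := by
      have e1 : x + t • y + β • (x - f t • y) = (1 + β) • x + (t - β * f t) • y := by module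
      rw [e1, hKβ, hKu]
      module
    have := ho β
    rw [e, norm_smul, Real.norm_eq_abs] at this
    have hKabs : |K| = |t + f t| / |u + f t| := by rw [hK, abs_div]
    rw [hKabs] at this
    have habs : (0:ℝ) < |u + f t| := abs_pos.mpr hu
    calc φ t * |u + f t| ≤ |t + f t| / |u + f t| * φ u * |u + f t| := by
          exact mul_le_mul_of_nonneg_right this habs.le
      _ = |t + f t| * φ u := by field_simp
  -- t + f t < 0 for good points t < m
  have htfneg : ∀ t : ℝ, t < m → JamesOrth (x + t • y) (x - f t • y) → t + f t < 0 := by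
    intro t htm ho
    by_contra h
    push_neg at h
    rcases eq_or_lt_of_le h with heq | hlt
    · have h1 := hstar t (t + 1) ho (by rw [show t + 1 + f t = (t + f t) + 1 by ring, ← heq]; norm_num)
      rw [← heq] at h1
      simp only [abs_zero, zero_mul] at h1
      have h2 : (0:ℝ) < |t + 1 + f t| := abs_pos.mpr
        (by rw [show t + 1 + f t = (t + f t) + 1 by ring, ← heq]; norm_num)
      nlinarith [hpos t]
    · set u : ℝ := (t + m) / 2 with hu
      have htu : t < u := by rw [hu]; linarith
      have hum : u ≤ m := by rw [hu]; linarith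
      have huf : 0 < u + f t := by linarith
      have h1 := hstar t u ho huf.ne'
      rw [abs_of_pos huf, abs_of_pos hlt] at h1
      have h2 : φ u < φ t := hdec t u htu hum
      nlinarith [hpos t, hpos u]
  -- right derivative of φ
  set r : ℝ → ℝ := fun t => sInf (slope φ t '' Ioi t) with hrdef
  have hsmono : ∀ t : ℝ, MonotoneOn (slope φ t) (Ioi t) := by
    intro t u hu v hv huv
    exact hconv.slope_mono (mem_univ t) ⟨mem_univ u, hu.ne'⟩ ⟨mem_univ v, hv.ne'⟩ huv
  have hbdd : ∀ t : ℝ, BddBelow (slope φ t '' Ioi t) := by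
    intro t
    refine ⟨slope φ (t - 1) t, ?_⟩
    rintro v ⟨u, hu, rfl⟩
    have h := hconv.slope_mono_adjacent (mem_univ (t-1)) (mem_univ u)
      (show t - 1 < t by linarith) hu
    simpa only [slope_def_field] using h
  have htends : ∀ t : ℝ, Tendsto (slope φ t) (𝓝[>] t) (𝓝 (r t)) :=
    fun t => MonotoneOn.tendsto_nhdsGT (hsmono t) (hbdd t)
  have hR1 : ∀ t : ℝ, HasDerivWithinAt φ (r t) (Ioi t) t := by
    intro t
    rw [hasDerivWithinAt_iff_tendsto_slope]
    have : Ioi t \ {t} = Ioi t := diff_singleton_eq_self (by simp)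
    rw [this]
    exact htends t
  have hrle : ∀ s u : ℝ, s < u → r s ≤ slope φ s u :=
    fun s u h => csInf_le (hbdd s) ⟨u, h, rfl⟩
  have hler : ∀ s t : ℝ, s < t → slope φ s t ≤ r t := by
    intro s t h
    refine le_csInf ⟨slope φ t (t+1), t+1, by simp, rfl⟩ ?_
    rintro v ⟨w, hw, rfl⟩
    simpa only [slope_def_field] using
      hconv.slope_mono_adjacent (mem_univ s) (mem_univ w) h hw
  have hrmono : Monotone r := by
    intro s t h
    rcases h.eq_or_lt with rfl | h
    · exact le_rfl
    · exact (hrle s t h).trans (hler s t h)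
  -- slope bounds at good points
  have hub : ∀ t u : ℝ, t < m → JamesOrth (x + t • y) (x - f t • y) → u < t →
      slope φ u t ≤ φ t / (t + f t) := by
    intro t u htm ho hut
    have htf := htfneg t htm ho
    have huf : u + f t < 0 := by linarith
    have h1 := hstar t u ho huf.ne
    rw [abs_of_neg huf, abs_of_neg htf] at h1
    rw [slope_def_field, le_div_iff_of_neg htf]
    rw [div_mul_eq_mul_div, le_div_iff₀ (by linarith : (0:ℝ) < t - u)]
    nlinarith
  have hlb : ∀ t u : ℝ, t < m → JamesOrth (x + t • y) (x - f t • y) → t < u → u + f t < 0 →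
      φ t / (t + f t) ≤ slope φ t u := by
    intro t u htm ho htu huf
    have htf := htfneg t htm ho
    have h1 := hstar t u ho huf.ne
    rw [abs_of_neg huf, abs_of_neg htf] at h1
    rw [slope_def_field, div_le_iff_of_neg htf]
    rw [div_mul_eq_mul_div, div_le_iff₀ (by linarith : (0:ℝ) < u - t)]
    nlinarith
  have hG1 : ∀ t : ℝ, t < m → JamesOrth (x + t • y) (x - f t • y) → φ t / (t + f t) ≤ r t := by
    intro t htm ho
    have htf := htfneg t htm ho
    refine ge_of_tendsto (htends t) ?_
    filter_upwards [Ioo_mem_nhdsGT (show t < -f t by linarith)] with u hu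
    exact hlb t u htm ho hu.1 (by linarith [hu.2])
  have hG2 : ∀ t s : ℝ, t < m → JamesOrth (x + t • y) (x - f t • y) → s < t →
      r s ≤ φ t / (t + f t) := by
    intro t s htm ho hst
    have h1 : r s ≤ slope φ s ((s + t)/2) := hrle s _ (by linarith)
    have h2 : slope φ s ((s + t)/2) ≤ slope φ ((s + t)/2) t := by
      simpa only [slope_def_field] using hconv.slope_mono_adjacent (mem_univ s) (mem_univ t)
        (show s < (s + t)/2 by linarith) (show (s + t)/2 < t by linarith)
    have h3 : slope φ ((s + t)/2) t ≤ φ t / (t + f t) := hub t _ htm ho (by linarith)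
    linarith
  -- a.e. identification of the derivative
  have hDc : Set.Countable {x : ℝ | ¬ContinuousAt r x} := hrmono.countable_not_continuousAt
  have haeD : ∀ᵐ t : ℝ ∂volume, t ∉ {x : ℝ | ¬ContinuousAt r x} :=
    measure_eq_zero_iff_ae_notMem.mp (hDc.measure_zero volume)
  have hae : ∀ᵐ t : ℝ ∂volume, t < m → r t / φ t = (t + f t)⁻¹ := by
    filter_upwards [hf, haeD] with t h1 h2 htm
    have ho := h1 htm
    have htf := htfneg t htm ho
    have hcontr : ContinuousAt r t := not_not.mp h2
    have hle : r t ≤ φ t / (t + f t) := by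
      have htd : Tendsto r (𝓝[<] t) (𝓝 (r t)) :=
        (hcontr.continuousWithinAt (s := Iio t)).tendsto
      refine le_of_tendsto htd ?_
      exact eventually_nhdsWithin_of_forall fun s hs => hG2 t s htm ho hs
    have hge := hG1 t htm ho
    have hr : r t = φ t / (t + f t) := le_antisymm hle hge
    rw [hr, div_div, mul_comm, ← div_div, div_self (hpos t).ne', one_div]
  -- integration
  intro α hαm
  have hψcont : ContinuousOn (fun t => Real.log (φ t)) (Icc α m) := fun t _ =>
    ((Real.continuousAt_log (hpos t).ne').comp hφcont.continuousAt).continuousWithinAt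
  have hψderiv : ∀ t ∈ Ioo α m, HasDerivWithinAt (fun t => Real.log (φ t)) (r t / φ t) (Ioi t) t :=
    fun t _ => (hR1 t).log (hpos t).ne'
  have hint : IntervalIntegrable (fun t => r t / φ t) volume α m := by
    have h1 : IntervalIntegrable r volume α m := hrmono.intervalIntegrable
    have h2 : ContinuousOn (fun t => (φ t)⁻¹) (uIcc α m) :=
      (hφcont.inv₀ fun t => (hpos t).ne').continuousOn
    simpa [div_eq_mul_inv] using h1.mul_continuousOn h2
  have hFTC : ∫ t in α..m, r t / φ t = Real.log (φ m) - Real.log (φ α) :=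
    intervalIntegral.integral_eq_sub_of_hasDeriv_right_of_le hαm.le hψcont hψderiv hint
  have haeNe : ∀ᵐ t : ℝ ∂volume, t ≠ m := by
    have : ∀ᵐ t : ℝ ∂volume, t ∉ ({m} : Set ℝ) :=
      measure_eq_zero_iff_ae_notMem.mp (measure_singleton m)
    filter_upwards [this] with t ht
    simpa using ht
  have hcongr : ∫ t in α..m, (t + f t)⁻¹ = ∫ t in α..m, r t / φ t := by
    refine intervalIntegral.integral_congr_ae ?_
    filter_upwards [hae, haeNe] with t h1 h2 ht
    rw [uIoc_of_le hαm.le] at ht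
    exact (h1 (lt_of_le_of_ne ht.2 h2)).symm
  have hI : ∫ t in α..m, (t + f t)⁻¹ = Real.log (φ m) - Real.log (φ α) :=
    hcongr.trans hFTC
  show φ α = φ m * Real.exp (-∫ t in α..m, (t + f t)⁻¹)
  rw [hI, neg_sub, Real.exp_sub, Real.exp_log (hpos α), Real.exp_log (hpos m),
    mul_comm, div_mul_cancel₀ _ (hpos m).ne']
end

section
/- Let E be a real Banach space and T : E → E a linear operator preserving James orthogonality (x ⊥ y implies Tx ⊥ Ty). Let x, y ∈ E be such that x, y are linearly independent and Tx, Ty are linearly independent. Then {α ∈ ℝ : x + α y ⊥ y} = {α ∈ ℝ : Tx + α Ty ⊥ Ty}. -/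
section Aux

open Filter

variable {E : Type*} [NormedAddCommGroup E] [NormedSpace ℝ E]

/-- `x + α y ⊥ y` iff `α` minimizes `γ ↦ ‖x + γ y‖`. -/
lemma jo_iff_min (x y : E) (α : ℝ) :
    JamesOrth (x + α • y) y ↔ ∀ γ : ℝ, ‖x + α • y‖ ≤ ‖x + γ • y‖ := by
  constructor
  · intro h γ
    have e : x + α • y + (γ - α) • y = x + γ • y := by module
    have := h (γ - α)
    rwa [e] at this
  · intro h β
    have e : x + α • y + β • y = x + (α + β) • y := by module
    rw [e]; exact h (α + β)

lemma jo_neg {u z : E} (h : JamesOrth u z) : JamesOrth u (-z) := by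
  intro t
  have := h (-t)
  rwa [show u + (-t) • z = u + t • (-z) by module] at this

/-- Minimizers of a convex function form an interval. -/
lemma min_interval (x y : E) {p q r : ℝ}
    (hp : ∀ γ : ℝ, ‖x + p • y‖ ≤ ‖x + γ • y‖)
    (hq : ∀ γ : ℝ, ‖x + q • y‖ ≤ ‖x + γ • y‖)
    (hpr : p ≤ r) (hrq : r ≤ q) :
    ∀ γ : ℝ, ‖x + r • y‖ ≤ ‖x + γ • y‖ := by
  rcases eq_or_lt_of_le (hpr.trans hrq) with hpq | hpq
  · have hrp : r = p := le_antisymm (hpq ▸ hrq) hpr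
    rw [hrp]; exact hp
  · intro γ
    set t : ℝ := (r - p) / (q - p) with ht
    have hqp : (0:ℝ) < q - p := by linarith
    have ht0 : 0 ≤ t := div_nonneg (by linarith) (by linarith)
    have ht1 : t ≤ 1 := by
      rw [div_le_one hqp]; linarith
    have hr : r = (1 - t) * p + t * q := by
      have htq : t * (q - p) = r - p := by rw [ht]; field_simp
      linear_combination -htq
    have e : x + r • y = (1 - t) • (x + p • y) + t • (x + q • y) := by
      rw [hr]; module
    calc ‖x + r • y‖ = ‖(1 - t) • (x + p • y) + t • (x + q • y)‖ := by rw [e]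
      _ ≤ ‖(1 - t) • (x + p • y)‖ + ‖t • (x + q • y)‖ := norm_add_le _ _
      _ = (1 - t) * ‖x + p • y‖ + t * ‖x + q • y‖ := by
          rw [norm_smul, norm_smul, Real.norm_of_nonneg (by linarith), Real.norm_of_nonneg ht0]
      _ ≤ (1 - t) * ‖x + γ • y‖ + t * ‖x + γ • y‖ := by
          gcongr
          · exact hp γ
          · exact hq γ
      _ = ‖x + γ • y‖ := by ring

/-- Existence of a minimizer when `y ≠ 0`. -/
lemma exists_min (x y : E) (hy : y ≠ 0) :
    ∃ a : ℝ, ∀ γ : ℝ, ‖x + a • y‖ ≤ ‖x + γ • y‖ := by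
  have hcont : Continuous fun γ : ℝ => ‖x + γ • y‖ := by fun_prop
  apply hcont.exists_forall_le
  have hylt : (0:ℝ) < ‖y‖ := norm_pos_iff.mpr hy
  have key : ∀ γ : ℝ, ‖y‖ * ‖γ‖ - ‖x‖ ≤ ‖x + γ • y‖ := by
    intro γ
    have : ‖γ • y‖ ≤ ‖x + γ • y‖ + ‖x‖ := by
      calc ‖γ • y‖ = ‖(x + γ • y) - x‖ := by rw [add_sub_cancel_left]
        _ ≤ ‖x + γ • y‖ + ‖x‖ := norm_sub_le _ _
    rw [norm_smul] at this
    have : ‖γ‖ * ‖y‖ ≤ ‖x + γ • y‖ + ‖x‖ := this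
    linarith
  have h1 : Tendsto (fun γ : ℝ => ‖y‖ * ‖γ‖ - ‖x‖) (cocompact ℝ) atTop := by
    have := (tendsto_norm_cocompact_atTop (E := ℝ)).const_mul_atTop hylt
    simpa [sub_eq_add_neg] using tendsto_atTop_add_const_right (cocompact ℝ) (-‖x‖) this
  exact tendsto_atTop_mono key h1

/-- The one-sided contradiction lemma: if `α` is a minimizer on the `T` side but lies
strictly above the whole minimizing set on the source side, we reach a contradiction. -/
lemma one_side (T : E →ₗ[ℝ] E)
    (hT : ∀ x y : E, JamesOrth x y → JamesOrth (T x) (T y))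
    (x y : E) (h1 : ∀ β : ℝ, x + β • y ≠ 0) (hy : y ≠ 0)
    (h3 : ∀ β : ℝ, T x + β • T y ≠ 0) (α : ℝ)
    (hα : JamesOrth (T x + α • T y) (T y))
    (hupper : ∀ β : ℝ, JamesOrth (x + β • y) y → β < α) : False := by
  classical
  set S : Set ℝ := {β : ℝ | ∀ γ : ℝ, ‖x + β • y‖ ≤ ‖x + γ • y‖} with hS
  obtain ⟨a₀, ha₀⟩ := exists_min x y hy
  have hSne : S.Nonempty := ⟨a₀, ha₀⟩
  have hSbdd : BddAbove S := by
    refine ⟨α, fun β hβ => le_of_lt (hupper β ((jo_iff_min x y β).2 hβ))⟩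
  have hSclosed : IsClosed S := by
    have : S = ⋂ γ : ℝ, {β : ℝ | ‖x + β • y‖ ≤ ‖x + γ • y‖} := Set.setOf_forall _
    rw [this]
    exact isClosed_iInter fun γ => isClosed_le (by fun_prop) continuous_const
  set b : ℝ := sSup S with hbdef
  have hb : b ∈ S := hSclosed.csSup_mem hSne hSbdd
  have hbα : b < α := hupper b ((jo_iff_min x y b).2 hb)
  -- minimality on the T side at b and α
  have hgb : ∀ γ : ℝ, ‖T x + b • T y‖ ≤ ‖T x + γ • T y‖ := by
    have := hT _ _ ((jo_iff_min x y b).2 hb)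
    rw [map_add, map_smul] at this
    exact (jo_iff_min (T x) (T y) b).1 this
  have hgα : ∀ γ : ℝ, ‖T x + α • T y‖ ≤ ‖T x + γ • T y‖ := (jo_iff_min (T x) (T y) α).1 hα
  set ε : ℝ := (α - b) / 4 with hεdef
  have hε : 0 < ε := by simp only [hεdef]; linarith
  set β : ℝ := (b + α) / 2 with hβdef
  have hβb : b < β := by simp only [hβdef]; linarith
  have hflat : ∀ θ : ℝ, b ≤ θ → θ ≤ α → ∀ γ : ℝ, ‖T x + θ • T y‖ ≤ ‖T x + γ • T y‖ :=
    fun θ h₁ h₂ => min_interval (T x) (T y) hgb hgα h₁ h₂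
  set u : E := x + β • y with hudef
  have hu : u ≠ 0 := h1 β
  obtain ⟨φ, hφ1, hφu⟩ := exists_dual_vector ℝ u (norm_ne_zero_iff.mpr hu)
  have hun : (0:ℝ) < ‖u‖ := norm_pos_iff.mpr hu
  have hkey : ∀ z : E, φ z = 0 → ∀ t : ℝ, ‖u‖ ≤ ‖u + t • z‖ := by
    intro z hz t
    have e1 : φ (u + t • z) = φ u := by
      have ha := φ.map_add u (t • z)
      have hb := φ.map_smul t z
      rw [ha, hb, hz, smul_zero, add_zero]
    calc ‖u‖ = φ u := hφu.symm
      _ = φ (u + t • z) := e1.symm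
      _ ≤ |φ (u + t • z)| := le_abs_self _
      _ ≤ ‖φ‖ * ‖u + t • z‖ := φ.le_opNorm _
      _ = ‖u + t • z‖ := by rw [hφ1, one_mul]
  have hβnotS : β ∉ S := fun h => absurd (le_csSup hSbdd h) (not_le.2 hβb)
  set s : ℝ := -(φ y) / ‖u‖ with hsdef
  have hs : s ≠ 0 := by
    intro h0
    have hφy : φ y = 0 := by
      have := h0
      rw [hsdef, div_eq_zero_iff] at this
      rcases this with h | h
      · linarith [neg_eq_zero.mp h]
      · exact absurd h (ne_of_gt hun)
    apply hβnotS
    intro γ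
    have := hkey y hφy (γ - β)
    rwa [show u + (γ - β) • y = x + γ • y by rw [hudef]; module] at this
  set w : E := y + s • u with hwdef
  have hφw : φ w = 0 := by
    rw [hwdef, map_add, map_smul, hφu]
    simp only [smul_eq_mul, hsdef, RCLike.ofReal_real_eq_id, id_eq]
    field_simp
    ring
  have hw : JamesOrth u w := hkey w hφw
  have hTuw : JamesOrth (T u) (T w) := hT u w hw
  have hTu : T u = T x + β • T y := by rw [hudef, map_add, map_smul]
  have hTw : T w = T y + s • T u := by rw [hwdef, map_add, map_smul]
  set δ : ℝ := min (1/2 : ℝ) (ε * |s| / 2) with hδdef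
  have hsabs : (0:ℝ) < |s| := abs_pos.mpr hs
  have hδ0 : 0 < δ := lt_min (by norm_num) (by positivity)
  have hδ1 : δ ≤ 1/2 := min_le_left _ _
  have hδε : δ ≤ ε * |s| / 2 := min_le_right _ _
  have h1δ : (0:ℝ) < 1 - δ := by linarith
  set t : ℝ := -δ / s with htdef
  have hts : t * s = -δ := by rw [htdef]; field_simp
  set β' : ℝ := β + t / (1 - δ) with hβ'def
  have hid : T u + t • T w = (1 - δ) • (T x + β' • T y) := by
    rw [hTw, hTu, hβ'def]
    have hc : (1 - δ) * (β + t / (1 - δ)) = (1 - δ) * β + t := by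
      field_simp
    have expand : T x + β • T y + t • (T y + s • (T x + β • T y))
        = (1 + t * s) • (T x + β • T y) + t • T y := by module
    rw [expand, hts]
    have : ((1:ℝ) + -δ) = 1 - δ := by ring
    rw [this]
    have goal : (1 - δ) • (T x + β • T y) + t • T y
        = (1 - δ) • (T x + (β + t / (1 - δ)) • T y) := by
      have : (1 - δ) • (T x + (β + t / (1 - δ)) • T y)
          = (1 - δ) • T x + ((1 - δ) * (β + t / (1 - δ))) • T y := by module
      rw [this, hc]
      module
    exact goal
  have htbound : |t / (1 - δ)| ≤ ε := by
    rw [abs_div, htdef, abs_div, abs_neg, abs_of_pos hδ0, abs_of_pos h1δ]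
    rw [div_div, div_le_iff₀ (by positivity)]
    calc δ ≤ ε * |s| / 2 := hδε
      _ ≤ ε * (|s| * (1 - δ)) := by nlinarith
  have hβ'b : b ≤ β' := by
    have : -ε ≤ t / (1 - δ) := neg_le_of_abs_le htbound
    simp only [hβ'def, hβdef, hεdef] at *
    linarith
  have hβ'α : β' ≤ α := by
    have : t / (1 - δ) ≤ ε := le_of_abs_le htbound
    simp only [hβ'def, hβdef, hεdef] at *
    linarith
  have hgβ' : ‖T x + β' • T y‖ ≤ ‖T x + β • T y‖ := hflat β' hβ'b hβ'α β
  have hTun : (0:ℝ) < ‖T x + β • T y‖ := norm_pos_iff.mpr (h3 β)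
  have hfinal := hTuw t
  rw [hid, hTu, norm_smul, Real.norm_of_nonneg (le_of_lt h1δ)] at hfinal
  nlinarith [hgβ']

end Aux

theorem orthogonality_intervals_coincide
    {E : Type*} [NormedAddCommGroup E] [NormedSpace ℝ E] [CompleteSpace E]
    (T : E →ₗ[ℝ] E)
    (hT : ∀ x y : E, JamesOrth x y → JamesOrth (T x) (T y))
    (x y : E) (hxy : LinearIndependent ℝ ![x, y])
    (hTxy : LinearIndependent ℝ ![T x, T y]) :
    {α : ℝ | JamesOrth (x + α • y) y} = {α : ℝ | JamesOrth (T x + α • T y) (T y)} := by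
  have hxy' := linearIndependent_fin2.mp hxy
  have hTxy' := linearIndependent_fin2.mp hTxy
  simp only [Matrix.cons_val_one, Matrix.head_cons, Matrix.cons_val_zero] at hxy' hTxy'
  have hy : y ≠ 0 := hxy'.1
  have h1 : ∀ β : ℝ, x + β • y ≠ 0 := by
    intro β h
    exact hxy'.2 (-β) (by rw [neg_smul]; exact (neg_eq_of_add_eq_zero_left h).symm ▸ rfl)
  have h3 : ∀ β : ℝ, T x + β • T y ≠ 0 := by
    intro β h
    exact hTxy'.2 (-β) (by rw [neg_smul]; exact (neg_eq_of_add_eq_zero_left h).symm ▸ rfl)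
  ext α
  simp only [Set.mem_setOf_eq]
  constructor
  · intro h
    have := hT _ _ h
    rwa [map_add, map_smul] at this
  · intro h
    by_contra hne
    by_cases hcase : ∀ β : ℝ, JamesOrth (x + β • y) y → β < α
    · exact one_side T hT x y h1 hy h3 α h hcase
    · push_neg at hcase
      obtain ⟨β₁, hβ₁, hαβ₁⟩ := hcase
      have hαβ₁' : α < β₁ := by
        rcases lt_or_eq_of_le hαβ₁ with h' | h'
        · exact h'
        · exact absurd (h' ▸ hβ₁) hne
      -- apply one_side with y replaced by -y, α by -α
      have hy' : -y ≠ 0 := neg_ne_zero.mpr hy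
      have h1' : ∀ β : ℝ, x + β • (-y) ≠ 0 := by
        intro β
        rw [show x + β • (-y) = x + (-β) • y by module]
        exact h1 (-β)
      have h3' : ∀ β : ℝ, T x + β • T (-y) ≠ 0 := by
        intro β
        rw [map_neg, show T x + β • (-(T y)) = T x + (-β) • T y by module]
        exact h3 (-β)
      have hα' : JamesOrth (T x + (-α) • T (-y)) (T (-y)) := by
        rw [map_neg, show T x + (-α) • (-(T y)) = T x + α • T y by module]
        exact jo_neg h
      have hupper' : ∀ β : ℝ, JamesOrth (x + β • (-y)) (-y) → β < -α := by
        intro β hβ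
        rw [show x + β • (-y) = x + (-β) • y by module] at hβ
        have hβy : JamesOrth (x + (-β) • y) y := by
          have := jo_neg hβ
          rwa [neg_neg] at this
        by_contra hle
        push_neg at hle
        -- hle : -α ≤ β, so -β ≤ α < β₁
        have hmem : ∀ γ : ℝ, ‖x + α • y‖ ≤ ‖x + γ • y‖ := by
          apply min_interval x y ((jo_iff_min x y (-β)).1 hβy) ((jo_iff_min x y β₁).1 hβ₁)
          · linarith
          · linarith
        exact hne ((jo_iff_min x y α).2 hmem)
      exact one_side T hT x (-y) h1' hy' h3' (-α) hα' hupper'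
end

section
/- Let E be a real Banach space and T : E → E a linear operator preserving James orthogonality (x ⊥ y implies Tx ⊥ Ty). Let x, y ∈ E be such that x, y are linearly independent and Tx, Ty are linearly independent. Then there exists a constant c > 0 such that ‖Tx + α Ty‖ = c · ‖x + α y‖ for every α ∈ ℝ. -/
lemma convexOn_norm_affine {E : Type*} [NormedAddCommGroup E] [NormedSpace ℝ E] (u v : E) :
    ConvexOn ℝ Set.univ (fun t : ℝ => ‖u + t • v‖) := by
  refine ⟨convex_univ, fun a _ b _ μ ν hμ hν hμν => ?_⟩
  have h : u + (μ • a + ν • b) • v = μ • (u + a • v) + ν • (u + b • v) := by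
    simp only [smul_eq_mul]; match_scalars <;> ring_nf <;> linarith
  simp only [h]
  calc ‖μ • (u + a • v) + ν • (u + b • v)‖ ≤ ‖μ • (u + a • v)‖ + ‖ν • (u + b • v)‖ :=
        norm_add_le _ _
    _ = μ * ‖u + a • v‖ + ν * ‖u + b • v‖ := by
        rw [norm_smul, norm_smul, Real.norm_eq_abs, Real.norm_eq_abs, abs_of_nonneg hμ,
          abs_of_nonneg hν]

lemma exists_support (f : ℝ → ℝ) (hf : ConvexOn ℝ Set.univ f) (a : ℝ) :
    ∃ p : ℝ, ∀ s : ℝ, f a + p * (s - a) ≤ f s := by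
  set S : Set ℝ := (fun s => (f a - f s) / (a - s)) '' Set.Iio a with hS
  have hne : S.Nonempty := ⟨_, ⟨a - 1, by simp, rfl⟩⟩
  have hslope : ∀ s < a, ∀ t > a, (f a - f s) / (a - s) ≤ (f t - f a) / (t - a) := by
    intro s hs t ht
    exact hf.slope_mono_adjacent (Set.mem_univ s) (Set.mem_univ t) hs ht
  have hbdd : BddAbove S := by
    refine ⟨(f (a + 1) - f a) / (a + 1 - a), ?_⟩
    rintro _ ⟨s, hs, rfl⟩
    exact hslope s hs (a + 1) (by linarith)
  refine ⟨sSup S, fun s => ?_⟩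
  rcases lt_trichotomy s a with h | h | h
  · have hle : (f a - f s) / (a - s) ≤ sSup S := le_csSup hbdd ⟨s, h, rfl⟩
    rw [div_le_iff₀ (by linarith : (0:ℝ) < a - s)] at hle
    nlinarith
  · simp [h]
  · have hle : sSup S ≤ (f s - f a) / (s - a) := by
      apply csSup_le hne
      rintro _ ⟨t, ht, rfl⟩
      exact hslope t ht s h
    rw [le_div_iff₀ (by linarith : (0:ℝ) < s - a)] at hle
    nlinarith

lemma key_transfer {E : Type*} [NormedAddCommGroup E] [NormedSpace ℝ E]
    (T : E →ₗ[ℝ] E) (hT : ∀ u v : E, JamesOrth u v → JamesOrth (T u) (T v))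
    (x y : E) (a p : ℝ) (hfa : 0 < ‖x + a • y‖)
    (hsup : ∀ s : ℝ, ‖x + a • y‖ + p * (s - a) ≤ ‖x + s • y‖) (s : ℝ) :
    ‖T x + a • T y‖ + ‖T x + a • T y‖ / ‖x + a • y‖ * p * (s - a) ≤ ‖T x + s • T y‖ := by
  have hTu : T (x + a • y) = T x + a • T y := by simp [map_add, map_smul]
  have hga : (0:ℝ) ≤ ‖T x + a • T y‖ := norm_nonneg _
  rcases eq_or_ne p 0 with hp | hp
  · have horth : JamesOrth (x + a • y) y := by
      intro α
      have h2 : x + a • y + α • y = x + (a + α) • y := by module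
      rw [h2]
      have h3 := hsup (a + α)
      rw [hp] at h3
      simpa using h3
    have h3 := hT _ _ horth
    rw [hTu] at h3
    have h4 := h3 (s - a)
    have h5 : T x + a • T y + (s - a) • T y = T x + s • T y := by module
    rw [h5] at h4
    rw [hp]
    simpa using h4
  · set β := a - ‖x + a • y‖ / p with hβ
    have hpβ : p * (β - a) = -‖x + a • y‖ := by
      rw [hβ]; field_simp; ring
    -- orthogonality for t > -1
    have hgt : ∀ t : ℝ, -1 < t → ‖x + a • y‖ ≤ ‖(x + a • y) + t • (x + β • y)‖ := by
      intro t ht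
      have h1t : (0:ℝ) < 1 + t := by linarith
      have hvec : (x + a • y) + t • (x + β • y)
          = (1 + t) • (x + ((a + t * β) / (1 + t)) • y) := by
        match_scalars
        · ring
        · field_simp
      rw [hvec, norm_smul, Real.norm_eq_abs, abs_of_pos h1t]
      have h6 := hsup ((a + t * β) / (1 + t))
      have h8 : (1 + t) * ((a + t * β) / (1 + t) - a) = t * (β - a) := by
        field_simp; ring
      have h9 := mul_le_mul_of_nonneg_left h6 h1t.le
      have h10 : (1 + t) * (‖x + a • y‖ + p * ((a + t * β) / (1 + t) - a)) = ‖x + a • y‖ := by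
        linear_combination p * h8 + t * hpβ
      linarith [h9, h10]
    have horth : JamesOrth (x + a • y) (x + β • y) := by
      intro t
      rcases lt_or_ge (-1 : ℝ) t with ht | ht
      · exact hgt t ht
      · have hconv := convexOn_norm_affine (x + a • y) (x + β • y)
        have hmid := hgt (-1/2) (by norm_num)
        have hlam0 : (0:ℝ) < 1 / (-2 * t) := by
          apply div_pos one_pos; linarith
        have hlam1 : 1 / (-2 * t) ≤ 1/2 := by
          rw [div_le_div_iff₀ (by linarith) (by norm_num)]; linarith
        have hcomb := hconv.2 (Set.mem_univ t) (Set.mem_univ (0:ℝ))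
          hlam0.le (by linarith : (0:ℝ) ≤ 1 - 1 / (-2 * t))
          (by ring : 1 / (-2 * t) + (1 - 1 / (-2 * t)) = 1)
        have ht0 : t ≠ 0 := by intro h; rw [h] at ht; norm_num at ht
        have harg : (1 / (-2 * t)) • t + (1 - 1 / (-2 * t)) • (0:ℝ) = -1/2 := by
          simp only [smul_eq_mul, mul_zero, add_zero]
          field_simp
        rw [harg] at hcomb
        simp only [smul_eq_mul, zero_smul, add_zero] at hcomb
        have h11 : (1 / (-2 * t)) * ‖x + a • y‖
            ≤ (1 / (-2 * t)) * ‖x + a • y + t • (x + β • y)‖ := by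
          nlinarith [hmid, hcomb]
        exact le_of_mul_le_mul_left h11 hlam0
    have horthT := hT _ _ horth
    have hTv : T (x + β • y) = T x + β • T y := by simp [map_add, map_smul]
    rw [hTu, hTv] at horthT
    have hmain : ‖T x + a • T y‖ * (‖x + a • y‖ + p * (s - a)) ≤ ‖T x + s • T y‖ * ‖x + a • y‖ := by
      rcases le_or_gt (‖x + a • y‖ + p * (s - a)) 0 with hc | hc
      · nlinarith [norm_nonneg (T x + s • T y), hga, hfa]
      · have hfaps : ‖x + a • y‖ + p * (s - a) = p * (s - β) := by linarith [hpβ]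
        have hpsβ : 0 < p * (s - β) := by rw [← hfaps]; exact hc
        have hsβ : β - s ≠ 0 := by
          intro h
          have : s - β = 0 := by linarith
          rw [this, mul_zero] at hpsβ; exact lt_irrefl _ hpsβ
        have h1t : 1 + (s - a) / (β - s) = (β - a) / (β - s) := by
          field_simp; ring
        have heq : ((β - a) / (β - s)) * (p * (s - β)) = ‖x + a • y‖ := by
          have h0 : (s - β) / (β - s) = -1 := by
            rw [div_eq_iff hsβ]; ring
          calc ((β - a) / (β - s)) * (p * (s - β))
              = (p * (β - a)) * ((s - β) / (β - s)) := by ring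
            _ = (-‖x + a • y‖) * (-1) := by rw [hpβ, h0]
            _ = ‖x + a • y‖ := by ring
        have heq' : (β - a) / (β - s) = ‖x + a • y‖ / (p * (s - β)) := by
          rw [eq_div_iff hpsβ.ne']; exact heq
        have h1tpos : 0 < 1 + (s - a) / (β - s) := by
          rw [h1t, heq']; exact div_pos hfa hpsβ
        have hvec : (T x + a • T y) + ((s - a) / (β - s)) • (T x + β • T y)
            = (1 + (s - a) / (β - s)) • (T x + s • T y) := by
          match_scalars
          · ring
          · field_simp; ring
        have h9 := horthT ((s - a) / (β - s))
        rw [hvec, norm_smul, Real.norm_eq_abs, abs_of_pos h1tpos] at h9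
        calc ‖T x + a • T y‖ * (‖x + a • y‖ + p * (s - a))
            = ‖T x + a • T y‖ * (p * (s - β)) := by rw [hfaps]
          _ ≤ ((1 + (s - a) / (β - s)) * ‖T x + s • T y‖) * (p * (s - β)) :=
              mul_le_mul_of_nonneg_right h9 hpsβ.le
          _ = ‖T x + s • T y‖ * (((β - a) / (β - s)) * (p * (s - β))) := by
              rw [h1t]; ring
          _ = ‖T x + s • T y‖ * ‖x + a • y‖ := by rw [heq]
    have hrw : ‖T x + a • T y‖ + ‖T x + a • T y‖ / ‖x + a • y‖ * p * (s - a)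
        = ‖T x + a • T y‖ * (‖x + a • y‖ + p * (s - a)) / ‖x + a • y‖ := by
      field_simp
    rw [hrw, div_le_iff₀ hfa]
    exact hmain


lemma const_ratio (f g pf : ℝ → ℝ)
    (hfc : Continuous f) (hgc : Continuous g)
    (hfpos : ∀ t, 0 < f t) (hgpos : ∀ t, 0 < g t)
    (hsup : ∀ a s, f a + pf a * (s - a) ≤ f s)
    (hkey : ∀ a s, g a + g a / f a * pf a * (s - a) ≤ g s)
    (a b : ℝ) (hab : a < b) : g a * f b = g b * f a := by
  obtain ⟨tm, htm, hmin⟩ := isCompact_Icc.exists_isMinOn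
    (Set.nonempty_Icc.mpr hab.le) hfc.continuousOn
  obtain ⟨tM, htM, hmax⟩ := isCompact_Icc.exists_isMaxOn
    (Set.nonempty_Icc.mpr hab.le) hgc.continuousOn
  set m := f tm with hmdef
  set Mg := g tM with hMgdef
  have hm : 0 < m := hfpos tm
  have hMg : 0 < Mg := hgpos tM
  set C := Mg / (m * m) with hCdef
  have hC : 0 ≤ C := by positivity
  -- the two-point step estimates
  have hstep : ∀ α γ, α ∈ Set.Icc a b → γ ∈ Set.Icc a b → α ≤ γ →
      g α / f α - g γ / f γ ≤ C * ((pf γ - pf α) * (γ - α)) ∧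
      g γ / f γ - g α / f α ≤ C * ((pf γ - pf α) * (γ - α)) := by
    intro α γ hα hγ hle
    have hfα := hfpos α
    have hfγ := hfpos γ
    have k1 := hkey α γ
    have k2 := hkey γ α
    have s1 := hsup α γ
    have s2 := hsup γ α
    set A := g α / f α with hA
    set B := g γ / f γ with hB
    have hHα : A * f α = g α := div_mul_cancel₀ _ hfα.ne'
    have hHγ : B * f γ = g γ := div_mul_cancel₀ _ hfγ.ne'
    have hmα : m ≤ f α := hmin hα
    have hmγ : m ≤ f γ := hmin hγ
    have hMα : g α ≤ Mg := hmax hα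
    have hMγ : g γ ≤ Mg := hmax hγ
    have hA0 : 0 ≤ A := le_of_lt (div_pos (hgpos α) hfα)
    have hB0 : 0 ≤ B := le_of_lt (div_pos (hgpos γ) hfγ)
    have hAM : A * m ≤ Mg := by
      calc A * m ≤ A * f α := mul_le_mul_of_nonneg_left hmα hA0
        _ = g α := hHα
        _ ≤ Mg := hMα
    have hBM : B * m ≤ Mg := by
      calc B * m ≤ B * f γ := mul_le_mul_of_nonneg_left hmγ hB0
        _ = g γ := hHγ
        _ ≤ Mg := hMγ
    set D := (pf γ - pf α) * (γ - α) with hD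
    have hgap0 : (0:ℝ) ≤ f γ - f α - pf α * (γ - α) := by linarith
    have hgap'0 : (0:ℝ) ≤ f α - f γ + pf γ * (γ - α) := by linarith [s2]
    have hgapD : f γ - f α - pf α * (γ - α) ≤ D := by
      rw [hD]; linarith [s2]
    have hgap'D : f α - f γ + pf γ * (γ - α) ≤ D := by
      rw [hD]; linarith [s1]
    have hD0 : 0 ≤ D := le_trans hgap0 hgapD
    have hCD : C * D * (m * m) = Mg * D := by
      rw [hCdef]; field_simp
    constructor
    · have t1 : (A - B) * f γ ≤ A * (f γ - f α - pf α * (γ - α)) := by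
        linarith [k1, hHα, hHγ]
      rcases le_or_gt (A - B) 0 with h | h
      · exact le_trans h (mul_nonneg hC hD0)
      · have t2 : (A - B) * (m * m) ≤ Mg * D := by
          calc (A - B) * (m * m) = ((A - B) * m) * m := by ring
            _ ≤ ((A - B) * f γ) * m :=
                mul_le_mul_of_nonneg_right (mul_le_mul_of_nonneg_left hmγ h.le) hm.le
            _ ≤ (A * (f γ - f α - pf α * (γ - α))) * m :=
                mul_le_mul_of_nonneg_right t1 hm.le
            _ = (A * m) * (f γ - f α - pf α * (γ - α)) := by ring
            _ ≤ Mg * D := mul_le_mul hAM hgapD hgap0 hMg.le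
        rw [← hCD] at t2
        exact le_of_mul_le_mul_right t2 (mul_pos hm hm)
    · have t1 : (B - A) * f α ≤ B * (f α - f γ + pf γ * (γ - α)) := by
        linarith [k2, hHα, hHγ]
      rcases le_or_gt (B - A) 0 with h | h
      · exact le_trans h (mul_nonneg hC hD0)
      · have t2 : (B - A) * (m * m) ≤ Mg * D := by
          calc (B - A) * (m * m) = ((B - A) * m) * m := by ring
            _ ≤ ((B - A) * f α) * m :=
                mul_le_mul_of_nonneg_right (mul_le_mul_of_nonneg_left hmα h.le) hm.le
            _ ≤ (B * (f α - f γ + pf γ * (γ - α))) * m :=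
                mul_le_mul_of_nonneg_right t1 hm.le
            _ = (B * m) * (f α - f γ + pf γ * (γ - α)) := by ring
            _ ≤ Mg * D := mul_le_mul hBM hgap'D hgap'0 hMg.le
        rw [← hCD] at t2
        exact le_of_mul_le_mul_right t2 (mul_pos hm hm)
  -- telescoping
  set K := C * (pf b - pf a) * (b - a) with hK
  have htel : ∀ n : ℕ, 1 ≤ n →
      g a / f a - g b / f b ≤ K / n ∧ g b / f b - g a / f a ≤ K / n := by
    intro n hn
    have hn0 : (0:ℝ) < n := by exact_mod_cast hn
    set δ := (b - a) / n with hδ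
    have hδ0 : 0 < δ := div_pos (by linarith) hn0
    set φ : ℕ → ℝ := fun i => a + i * δ with hφ
    have hφ0 : φ 0 = a := by simp [hφ]
    have hφn : φ n = b := by
      rw [hφ]; simp only; rw [hδ]; field_simp; ring
    have hmem : ∀ i : ℕ, i ≤ n → φ i ∈ Set.Icc a b := by
      intro i hi
      constructor
      · have : (0:ℝ) ≤ i * δ := by positivity
        simp only [hφ]; linarith
      · have h1 : (i:ℝ) ≤ n := by exact_mod_cast hi
        have h2 : (i:ℝ) * δ ≤ n * δ := mul_le_mul_of_nonneg_right h1 hδ0.le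
        have h3 : (n:ℝ) * δ = b - a := by rw [hδ]; field_simp
        simp only [hφ]; linarith
    have hsucc : ∀ i : ℕ, φ (i + 1) - φ i = δ := by
      intro i; simp only [hφ]; push_cast; ring
    have hbound : ∀ i ∈ Finset.range n,
        g (φ i) / f (φ i) - g (φ (i+1)) / f (φ (i+1))
          ≤ C * δ * (pf (φ (i+1)) - pf (φ i)) ∧
        g (φ (i+1)) / f (φ (i+1)) - g (φ i) / f (φ i)
          ≤ C * δ * (pf (φ (i+1)) - pf (φ i)) := by
      intro i hi
      rw [Finset.mem_range] at hi
      have h1 := hstep (φ i) (φ (i+1)) (hmem i (by omega)) (hmem (i+1) (by omega))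
        (by linarith [hsucc i, hδ0])
      rw [hsucc i] at h1
      constructor
      · calc g (φ i) / f (φ i) - g (φ (i+1)) / f (φ (i+1))
            ≤ C * ((pf (φ (i+1)) - pf (φ i)) * δ) := h1.1
          _ = C * δ * (pf (φ (i+1)) - pf (φ i)) := by ring
      · calc g (φ (i+1)) / f (φ (i+1)) - g (φ i) / f (φ i)
            ≤ C * ((pf (φ (i+1)) - pf (φ i)) * δ) := h1.2
          _ = C * δ * (pf (φ (i+1)) - pf (φ i)) := by ring
    have hsum : ∑ i ∈ Finset.range n, (C * δ * (pf (φ (i+1)) - pf (φ i)))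
        = C * δ * (pf b - pf a) := by
      rw [← Finset.mul_sum]
      have : ∑ i ∈ Finset.range n, (pf (φ (i+1)) - pf (φ i)) = pf (φ n) - pf (φ 0) :=
        Finset.sum_range_sub (fun i => pf (φ i)) n
      rw [this, hφ0, hφn]
    have hKn : C * δ * (pf b - pf a) = K / n := by
      rw [hK, hδ]; field_simp
    constructor
    · calc g a / f a - g b / f b
          = ∑ i ∈ Finset.range n, (g (φ i) / f (φ i) - g (φ (i+1)) / f (φ (i+1))) := by
            rw [Finset.sum_range_sub' (fun i => g (φ i) / f (φ i)) n, hφ0, hφn]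
        _ ≤ ∑ i ∈ Finset.range n, (C * δ * (pf (φ (i+1)) - pf (φ i))) :=
            Finset.sum_le_sum (fun i hi => (hbound i hi).1)
        _ = K / n := by rw [hsum, hKn]
    · calc g b / f b - g a / f a
          = ∑ i ∈ Finset.range n, (g (φ (i+1)) / f (φ (i+1)) - g (φ i) / f (φ i)) := by
            rw [Finset.sum_range_sub (fun i => g (φ i) / f (φ i)) n, hφ0, hφn]
        _ ≤ ∑ i ∈ Finset.range n, (C * δ * (pf (φ (i+1)) - pf (φ i))) :=
            Finset.sum_le_sum (fun i hi => (hbound i hi).2)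
        _ = K / n := by rw [hsum, hKn]
  have hlim : Filter.Tendsto (fun n : ℕ => K / n) Filter.atTop (nhds 0) :=
    tendsto_const_div_atTop_nhds_zero_nat K
  have h1 : g a / f a - g b / f b ≤ 0 :=
    ge_of_tendsto hlim (Filter.eventually_atTop.mpr ⟨1, fun n hn => (htel n hn).1⟩)
  have h2 : g b / f b - g a / f a ≤ 0 :=
    ge_of_tendsto hlim (Filter.eventually_atTop.mpr ⟨1, fun n hn => (htel n hn).2⟩)
  have h3 : g a / f a = g b / f b := by linarith
  rwa [div_eq_div_iff (hfpos a).ne' (hfpos b).ne'] at h3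

theorem norm_proportional_on_plane
    {E : Type*} [NormedAddCommGroup E] [NormedSpace ℝ E] [CompleteSpace E]
    (T : E →ₗ[ℝ] E)
    (hT : ∀ x y : E, JamesOrth x y → JamesOrth (T x) (T y))
    (x y : E) (hxy : LinearIndependent ℝ ![x, y])
    (hTxy : LinearIndependent ℝ ![T x, T y]) :
    ∃ c : ℝ, 0 < c ∧ ∀ α : ℝ, ‖T x + α • T y‖ = c * ‖x + α • y‖ := by
  have hx' : ∀ c : ℝ, c • y ≠ x := by
    have h := linearIndependent_fin2.mp hxy
    simpa using h.2
  have hTx' : ∀ c : ℝ, c • T y ≠ T x := by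
    have h := linearIndependent_fin2.mp hTxy
    simpa using h.2
  set f : ℝ → ℝ := fun t => ‖x + t • y‖ with hfdef
  set g : ℝ → ℝ := fun t => ‖T x + t • T y‖ with hgdef
  have hfpos : ∀ t : ℝ, 0 < f t := by
    intro t
    rw [hfdef]
    simp only [norm_pos_iff]
    intro h
    exact hx' (-t) (by rw [neg_smul, eq_comm, ← sub_eq_zero]; simpa [sub_neg_eq_add] using h)
  have hgpos : ∀ t : ℝ, 0 < g t := by
    intro t
    rw [hgdef]
    simp only [norm_pos_iff]
    intro h
    exact hTx' (-t) (by rw [neg_smul, eq_comm, ← sub_eq_zero]; simpa [sub_neg_eq_add] using h)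
  have hfc : Continuous f := by
    rw [hfdef]; fun_prop
  have hgc : Continuous g := by
    rw [hgdef]; fun_prop
  have hconv : ConvexOn ℝ Set.univ f := convexOn_norm_affine x y
  choose pf hpf using fun a => exists_support f hconv a
  have hkey : ∀ a s : ℝ, g a + g a / f a * pf a * (s - a) ≤ g s := fun a s =>
    key_transfer T hT x y a (pf a) (hfpos a) (hpf a) s
  have hconst : ∀ a b : ℝ, g a * f b = g b * f a := by
    intro a b
    rcases lt_trichotomy a b with h | h | h
    · exact const_ratio f g pf hfc hgc hfpos hgpos hpf hkey a b h
    · rw [h]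
    · exact (const_ratio f g pf hfc hgc hfpos hgpos hpf hkey b a h).symm
  refine ⟨g 0 / f 0, div_pos (hgpos 0) (hfpos 0), fun α => ?_⟩
  have h0 : g 0 * f α = g α * f 0 := hconst 0 α
  show g α = g 0 / f 0 * f α
  rw [div_mul_eq_mul_div, h0, mul_div_assoc, div_self (hfpos 0).ne', mul_one]
end

section
/- Let E be a real Banach space and T : E → E a linear operator preserving James orthogonality (x ⊥ y implies Tx ⊥ Ty). Then for all nonzero x, y ∈ E, ‖Tx‖ · ‖y‖ = ‖Ty‖ · ‖x‖. -/
/-- If `β` is a support slope at `t` of the convex function `s ↦ ‖x + s•y‖`, then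
`x + t•y` is James-orthogonal to `β•(x+t•y) - ‖x+t•y‖•y`. -/
lemma aux_orth {E : Type*} [NormedAddCommGroup E] [NormedSpace ℝ E]
    (x y : E) (t β : ℝ)
    (hβ : ∀ s : ℝ, ‖x + t • y‖ + s * β ≤ ‖x + (t + s) • y‖) :
    JamesOrth (x + t • y) (β • (x + t • y) - ‖x + t • y‖ • y) := by
  intro α
  have hFt0 : (0:ℝ) ≤ ‖x + t • y‖ := norm_nonneg _
  have hy1 : β ≤ ‖y‖ := by
    have h := hβ 1
    have h2 : ‖x + (t+1) • y‖ ≤ ‖x + t • y‖ + ‖y‖ := by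
      calc ‖x + (t+1) • y‖ = ‖(x + t • y) + y‖ := by rw [add_smul, one_smul, add_assoc]
        _ ≤ ‖x + t • y‖ + ‖y‖ := norm_add_le _ _
    linarith
  have hy2 : -β ≤ ‖y‖ := by
    have h := hβ (-1)
    have h2 : ‖x + (t+(-1)) • y‖ ≤ ‖x + t • y‖ + ‖y‖ := by
      calc ‖x + (t+(-1)) • y‖ = ‖(x + t • y) + (-1:ℝ) • y‖ := by rw [add_smul, add_assoc]
        _ ≤ ‖x + t • y‖ + ‖(-1:ℝ) • y‖ := norm_add_le _ _
        _ = ‖x + t • y‖ + ‖y‖ := by rw [norm_smul]; simp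
    linarith
  have key : x + t • y + α • (β • (x + t • y) - ‖x + t • y‖ • y)
      = (1 + α*β) • (x + t • y) - (α * ‖x + t • y‖) • y := by
    simp only [smul_sub, smul_smul, add_smul, one_smul]
    abel
  rw [key]
  set Ft := ‖x + t • y‖ with hFt
  have habs : -(α*β) ≤ |α| * ‖y‖ := by
    have h1 : -(α*β) ≤ |α*β| := neg_le_abs _
    have h2 : |α*β| = |α| * |β| := abs_mul _ _
    have h3 : |β| ≤ ‖y‖ := abs_le.2 ⟨by linarith, hy1⟩
    have h4 : |α| * |β| ≤ |α| * ‖y‖ := mul_le_mul_of_nonneg_left h3 (abs_nonneg _)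
    linarith
  rcases le_or_gt (1 + α*β) 0 with h1 | h1
  · have tri : ‖(α * Ft) • y‖ - ‖(1 + α*β) • (x + t • y)‖
        ≤ ‖(1 + α*β) • (x + t • y) - (α * Ft) • y‖ := by
      rw [norm_sub_rev]
      exact norm_sub_norm_le _ _
    have e1 : ‖(α * Ft) • y‖ = |α| * Ft * ‖y‖ := by
      rw [norm_smul, Real.norm_eq_abs, abs_mul, abs_of_nonneg hFt0]
    have e2 : ‖(1 + α*β) • (x + t • y)‖ = -(1 + α*β) * Ft := by
      rw [norm_smul, Real.norm_eq_abs, abs_of_nonpos h1]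
    have final : Ft ≤ |α| * Ft * ‖y‖ - (-(1 + α*β) * Ft) := by
      have : Ft * 1 ≤ Ft * (|α| * ‖y‖ + (1 + α*β)) := by
        apply mul_le_mul_of_nonneg_left _ hFt0
        nlinarith [habs]
      nlinarith [this]
    linarith [tri, e1 ▸ e2 ▸ tri, final]
  · set c := -(α * Ft) / (1 + α*β) with hc
    have hne : (1 + α*β) ≠ 0 := ne_of_gt h1
    have hcc : (1 + α*β) * c = -(α * Ft) := by
      rw [hc]; field_simp
    have hrw : (1 + α*β) • (x + t • y) - (α * Ft) • y = (1 + α*β) • (x + (t + c) • y) := by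
      have : (1 + α*β) • (x + (t + c) • y)
          = (1 + α*β) • (x + t • y) + ((1 + α*β) * c) • y := by
        simp only [smul_add, smul_smul, add_smul]
        abel
      rw [this, hcc]
      simp [sub_eq_add_neg, neg_smul]
    rw [hrw, norm_smul, Real.norm_eq_abs, abs_of_pos h1]
    have hsup := hβ c
    have : (1 + α*β) * (Ft + c * β) ≤ (1 + α*β) * ‖x + (t + c) • y‖ :=
      mul_le_mul_of_nonneg_left hsup (le_of_lt h1)
    nlinarith [this, hcc]


/-- Key inequality: for any support slope `β` of `F := fun s => ‖x+s•y‖` at `t`,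
`G t * (F t + s*β) ≤ G (t+s) * F t` for all `s`, where `G s = ‖Tx + s•Ty‖`. -/
lemma aux_R {E : Type*} [NormedAddCommGroup E] [NormedSpace ℝ E]
    (T : E →ₗ[ℝ] E)
    (hT : ∀ x y : E, JamesOrth x y → JamesOrth (T x) (T y))
    (x y : E) (t β : ℝ) (hpos : x + t • y ≠ 0)
    (hβ : ∀ s : ℝ, ‖x + t • y‖ + s * β ≤ ‖x + (t + s) • y‖) :
    ∀ s : ℝ, ‖T x + t • T y‖ * (‖x + t • y‖ + s * β)
      ≤ ‖T x + (t + s) • T y‖ * ‖x + t • y‖ := by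
  intro s
  set Ft := ‖x + t • y‖ with hFt
  have hFt0 : (0:ℝ) ≤ Ft := norm_nonneg _
  rcases le_or_gt (Ft + s * β) 0 with h0 | h0
  · calc ‖T x + t • T y‖ * (Ft + s * β) ≤ 0 :=
          mul_nonpos_of_nonneg_of_nonpos (norm_nonneg _) h0
      _ ≤ ‖T x + (t + s) • T y‖ * Ft := mul_nonneg (norm_nonneg _) hFt0
  · have horth := hT _ _ (aux_orth x y t β hβ)
    have hTu : T (x + t • y) = T x + t • T y := by simp
    have hTw : T (β • (x + t • y) - Ft • y) = β • (T x + t • T y) - Ft • T y := by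
      simp [map_sub, map_smul]
    rw [hTu, hTw] at horth
    set α := -s / (Ft + s * β) with hα
    have hne : Ft + s * β ≠ 0 := ne_of_gt h0
    have h1 : 1 + α * β = Ft / (Ft + s * β) := by
      rw [hα]; field_simp; ring
    have h1pos : 0 < 1 + α * β := by
      rw [h1]
      exact div_pos (by rw [hFt]; exact norm_pos_iff.2 hpos) h0
    have hkey := horth α
    have hrw : T x + t • T y + α • (β • (T x + t • T y) - Ft • T y)
        = (1 + α * β) • (T x + (t + s) • T y) := by
      have hac : (1 + α * β) * s = -(α * Ft) := by
        rw [h1, hα]; field_simp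
      have expand : (1 + α * β) • (T x + (t + s) • T y)
          = (1 + α * β) • (T x + t • T y) + ((1 + α * β) * s) • T y := by
        simp only [smul_add, smul_smul, add_smul]; abel
      rw [expand, hac]
      simp only [smul_sub, smul_smul]
      module
    rw [hrw, norm_smul, Real.norm_eq_abs, abs_of_pos h1pos, h1] at hkey
    -- hkey : ‖T x + t • T y‖ ≤ Ft / (Ft + s*β) * ‖T x + (t+s) • T y‖
    rw [div_mul_eq_mul_div, le_div_iff₀ h0] at hkey
    linarith [hkey]

section
open Set Filter Topology

lemma aux_mono {E : Type*} [NormedAddCommGroup E] [NormedSpace ℝ E]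
    (T : E →ₗ[ℝ] E)
    (hT : ∀ x y : E, JamesOrth x y → JamesOrth (T x) (T y))
    (x y : E) (hind : ∀ t : ℝ, x + t • y ≠ 0) :
    ∀ a b : ℝ, a ≤ b →
      ‖T x + a • T y‖ * ‖x + b • y‖ ≤ ‖T x + b • T y‖ * ‖x + a • y‖ := by
  intro a b hab
  let F : ℝ → ℝ := fun s => ‖x + s • y‖
  let G : ℝ → ℝ := fun s => ‖T x + s • T y‖
  have hFpos : ∀ s, 0 < F s := fun s => norm_pos_iff.2 (hind s)
  have hFcont : Continuous F :=
    (continuous_const.add (continuous_id.smul continuous_const)).norm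
  have hGcont : Continuous G :=
    (continuous_const.add (continuous_id.smul continuous_const)).norm
  have hFconv : ConvexOn ℝ Set.univ F := by
    have h2 := (convexOn_univ_norm (E := E)).comp_affineMap
      (AffineMap.lineMap x (x + y) : ℝ →ᵃ[ℝ] E)
    have heq : F = (fun u : E => ‖u‖) ∘ (AffineMap.lineMap x (x + y) : ℝ →ᵃ[ℝ] E) := by
      funext t
      simp [F, Function.comp, AffineMap.lineMap_apply, add_comm]
    rw [heq]
    simpa using h2
  -- the fencing argument
  have main : ∀ z ∈ Icc a b, -(G z / F z) ≤ -(G a / F a) := by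
    apply image_le_of_liminf_slope_right_le_deriv_boundary
      (B := fun _ => -(G a / F a)) (B' := fun _ => 0)
    · exact ((hGcont.div hFcont fun s => (hFpos s).ne').neg).continuousOn
    · exact le_refl _
    · exact continuousOn_const
    · exact fun s _ => hasDerivWithinAt_const _ _ _
    · intro t _ r hr
      -- construct the support slope β at t
      have hmono : MonotoneOn (slope F t) (Set.univ \ {t}) :=
        hFconv.slope_mono (Set.mem_univ t)
      have hmono' : MonotoneOn (slope F t) (Ioi t) := by
        intro u hu v hv huv
        exact hmono ⟨trivial, ne_of_gt hu⟩ ⟨trivial, ne_of_gt hv⟩ huv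
      have hbdd : BddBelow (slope F t '' Ioi t) := by
        refine ⟨slope F t (t - 1), ?_⟩
        rintro _ ⟨z, hz, rfl⟩
        exact hmono ⟨trivial, by norm_num⟩ ⟨trivial, ne_of_gt hz⟩ (by linarith [hz.out])
      set β := sInf (slope F t '' Ioi t) with hβdef
      have hβsupp : ∀ s : ℝ, F t + s * β ≤ F (t + s) := by
        intro s
        rcases lt_trichotomy s 0 with hs | hs | hs
        · have h1 : slope F t (t + s) ≤ β := by
            apply le_csInf (Set.Nonempty.image _ ⟨t + 1, by simp⟩)
            rintro _ ⟨z, hz, rfl⟩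
            refine hmono ⟨trivial, ?_⟩ ⟨trivial, ne_of_gt hz⟩ (by linarith [hz.out])
            simp only [Set.mem_singleton_iff]
            intro h; linarith
          rw [slope_def_field] at h1
          have h2 : (F (t + s) - F t) / (t + s - t) ≤ β := h1
          rw [div_le_iff_of_neg (by linarith : t + s - t < 0)] at h2
          nlinarith [h2]
        · simp [hs]
        · have h1 : β ≤ slope F t (t + s) :=
            csInf_le hbdd (Set.mem_image_of_mem _ (by simp [hs] : t + s ∈ Ioi t))
          rw [slope_def_field] at h1
          have h2 : β ≤ (F (t + s) - F t) / (t + s - t) := h1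
          rw [le_div_iff₀ (by linarith : (0:ℝ) < t + s - t)] at h2
          nlinarith [h2]
      have htends : Tendsto (slope F t) (𝓝[>] t) (𝓝 β) :=
        MonotoneOn.tendsto_nhdsGT hmono' hbdd
      -- the comparison function
      set Φ : ℝ → ℝ := fun z => G t / F t * (slope F t z - β) / F z with hΦdef
      have hΦtends : Tendsto Φ (𝓝[>] t) (𝓝 0) := by
        have h1 : Tendsto (fun z => G t / F t * (slope F t z - β)) (𝓝[>] t)
            (𝓝 (G t / F t * (β - β))) :=
          Tendsto.const_mul _ (htends.sub_const β)
        have h2 : Tendsto F (𝓝[>] t) (𝓝 (F t)) :=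
          (hFcont.continuousAt.tendsto).mono_left nhdsWithin_le_nhds
        have h3 := h1.div h2 (hFpos t).ne'
        simp at h3; exact h3
      have hev : ∀ᶠ z in 𝓝[>] t, Φ z < r := hΦtends.eventually_lt_const hr
      have hsb : ∀ᶠ z in 𝓝[>] t, slope (fun z => -(G z / F z)) t z ≤ Φ z := by
        filter_upwards [self_mem_nhdsWithin] with z hz
        have hzt : (0:ℝ) < z - t := sub_pos.2 hz
        have key := aux_R T hT x y t β (hind t) hβsupp (z - t)
        have hzz : t + (z - t) = z := by ring
        rw [hzz] at key
        -- key : G t * (F t + (z - t) * β) ≤ G z * F t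
        rw [slope_def_field, div_le_iff₀ hzt]
        have e1 : -(G z / F z) - -(G t / F t) = (G t * F z - G z * F t) / (F t * F z) := by
          field_simp [(hFpos t).ne', (hFpos z).ne']
          ring
        have e2 : Φ z * (z - t) = (G t * (F z - F t - (z - t) * β)) / (F t * F z) := by
          have hΦz : Φ z = G t / F t * (slope F t z - β) / F z := rfl
          rw [hΦz, slope_def_field]
          field_simp [(hFpos t).ne', (hFpos z).ne', hzt.ne']
        rw [e1, e2]
        have key' : G t * (F t + (z - t) * β) ≤ G z * F t := key
        gcongr
        nlinarith [key']
      exact ((hsb.and hev).mono fun z hz => lt_of_le_of_lt hz.1 hz.2).frequently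
  have hb := main b ⟨hab, le_refl b⟩
  have : G a / F a ≤ G b / F b := by linarith
  rw [div_le_div_iff₀ (hFpos a) (hFpos b)] at this
  exact this


theorem norm_ratio_constant
    {E : Type*} [NormedAddCommGroup E] [NormedSpace ℝ E] [CompleteSpace E]
    (T : E →ₗ[ℝ] E)
    (hT : ∀ x y : E, JamesOrth x y → JamesOrth (T x) (T y)) :
    ∀ x y : E, x ≠ 0 → y ≠ 0 → ‖T x‖ * ‖y‖ = ‖T y‖ * ‖x‖ := by

  intro x y hx hy
  by_cases hdep : ∃ a : ℝ, y = a • x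
  · obtain ⟨a, rfl⟩ := hdep
    rw [map_smul, norm_smul, norm_smul]
    ring
  · have hind : ∀ t : ℝ, x + t • y ≠ 0 := by
      intro t h
      rcases eq_or_ne t 0 with rfl | ht
      · simp only [zero_smul, add_zero] at h
        exact hx h
      · refine hdep ⟨-t⁻¹, ?_⟩
        have h1 : t • y = -x := by
          rw [add_comm] at h
          exact eq_neg_of_add_eq_zero_left h
        have h2 : y = t⁻¹ • (-x) := by
          rw [← h1, smul_smul, inv_mul_cancel₀ ht, one_smul]
        rw [h2, smul_neg, ← neg_smul]
    have hind2 : ∀ t : ℝ, x + t • (-y) ≠ 0 := by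
      intro t
      have e : x + t • (-y) = x + (-t) • y := by rw [smul_neg, neg_smul]
      rw [e]; exact hind (-t)
    have h1 := aux_mono T hT x y hind
    have h2 := aux_mono T hT x (-y) hind2
    have hconst : ∀ t : ℝ, ‖T x + t • T y‖ * ‖x‖ = ‖T x‖ * ‖x + t • y‖ := by
      intro t
      rcases le_or_gt 0 t with ht | ht
      · have i1 := h1 0 t ht
        have i2 := h2 (-t) 0 (by linarith)
        simp only [zero_smul, add_zero, map_neg, smul_neg, neg_smul, neg_neg, neg_zero] at i1 i2
        linarith
      · have i1 := h1 t 0 ht.le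
        have i2 := h2 0 (-t) (by linarith)
        simp only [zero_smul, add_zero, map_neg, smul_neg, neg_smul, neg_neg, neg_zero] at i1 i2
        linarith
    have heq : ∀ s : ℝ, 0 < s → ‖s • T x + T y‖ * ‖x‖ = ‖T x‖ * ‖s • x + y‖ := by
      intro s hs
      have h := hconst s⁻¹
      have e1 : ‖s • T x + T y‖ = s * ‖T x + s⁻¹ • T y‖ := by
        rw [show s • T x + T y = s • (T x + s⁻¹ • T y) by
          rw [smul_add, smul_smul, mul_inv_cancel₀ hs.ne', one_smul],
          norm_smul, Real.norm_eq_abs, abs_of_pos hs]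
      have e2 : ‖s • x + y‖ = s * ‖x + s⁻¹ • y‖ := by
        rw [show s • x + y = s • (x + s⁻¹ • y) by
          rw [smul_add, smul_smul, mul_inv_cancel₀ hs.ne', one_smul],
          norm_smul, Real.norm_eq_abs, abs_of_pos hs]
      rw [e1, e2]
      linear_combination s * h
    have hc1 : Continuous fun s : ℝ => ‖s • T x + T y‖ * ‖x‖ :=
      (((continuous_id.smul continuous_const).add continuous_const).norm).mul continuous_const
    have hc2 : Continuous fun s : ℝ => ‖T x‖ * ‖s • x + y‖ :=
      continuous_const.mul (((continuous_id.smul continuous_const).add continuous_const).norm)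
    have l1 : Tendsto (fun s : ℝ => ‖s • T x + T y‖ * ‖x‖) (𝓝[>] (0:ℝ))
        (𝓝 (‖T y‖ * ‖x‖)) := by
      have h0 := (hc1.tendsto 0).mono_left (nhdsWithin_le_nhds (s := Set.Ioi (0:ℝ)))
      simpa using h0
    have l2 : Tendsto (fun s : ℝ => ‖T x‖ * ‖s • x + y‖) (𝓝[>] (0:ℝ))
        (𝓝 (‖T x‖ * ‖y‖)) := by
      have h0 := (hc2.tendsto 0).mono_left (nhdsWithin_le_nhds (s := Set.Ioi (0:ℝ)))
      simpa using h0
    have leq : (fun s : ℝ => ‖s • T x + T y‖ * ‖x‖)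
        =ᶠ[𝓝[>] (0:ℝ)] (fun s : ℝ => ‖T x‖ * ‖s • x + y‖) := by
      filter_upwards [self_mem_nhdsWithin] with s hs
      exact heq s hs
    have := tendsto_nhds_unique (l1.congr' leq) l2
    linarith

end
end
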